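/- arXiv:2302.10316 — 2 statements merged into one kernel-verified Lean document; each statement's English description precedes it below -/
import Mathlib

section
/- Let E be a directed graph. If there is a sequence (Hₙ, Sₙ), n = 0, 1, 2, …, of admissible pairs of E such that either (∅,∅) < (H₀,S₀) < (H₁,S₁) < … is strictly increasing or (E⁰,∅) > (H₀,S₀) > (H₁,S₁) > … is strictly decreasing (the chain never becoming constant), then E does not have a composition series. -/
/-- A directed graph: vertices, edges, source and range maps. -/
structure DGraph where
  V : Type
  Ed : Type
  s : Ed → V
  r : Ed → V

namespace DGraph

variable (E : DGraph)

/-- One-step adjacency: there is an edge from `u` to `v`. -/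
def Adj (u v : E.V) : Prop := ∃ e, E.s e = u ∧ E.r e = v

/-- `u ≥ v`: there is a (finite) path from `u` to `v`. -/
def Reaches (u v : E.V) : Prop := Relation.ReflTransGen E.Adj u v

/-- The tree `T(W)` of a set of vertices. -/
def tree (W : Set E.V) : Set E.V := {u | ∃ v ∈ W, E.Reaches v u}

/-- The root `R(W)` of a set of vertices. -/
def root (W : Set E.V) : Set E.V := {u | ∃ v ∈ W, E.Reaches u v}

/-- The set of edges emitted by `v`. -/
def emits (v : E.V) : Set E.Ed := {e | E.s e = v}

/-- A sink emits no edges. -/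
def IsSink (v : E.V) : Prop := E.emits v = ∅

/-- An infinite emitter emits infinitely many edges. -/
def IsInfEmitter (v : E.V) : Prop := (E.emits v).Infinite

/-- A regular vertex is neither a sink nor an infinite emitter. -/
def IsRegular (v : E.V) : Prop := (E.emits v).Nonempty ∧ (E.emits v).Finite

/-- A hereditary set of vertices: `T(H) ⊆ H`. -/
def Hereditary (H : Set E.V) : Prop := ∀ u ∈ H, ∀ v, E.Reaches u v → v ∈ H

/-- A saturated set of vertices. -/
def Saturated (H : Set E.V) : Prop :=
  ∀ v, E.IsRegular v → (∀ e ∈ E.emits v, E.r e ∈ H) → v ∈ H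

/-- The saturated closure of `W`: the smallest hereditary and saturated set containing `W`. -/
def satClosure (W : Set E.V) : Set E.V :=
  ⋂₀ {H : Set E.V | E.Hereditary H ∧ E.Saturated H ∧ W ⊆ H}

/-- `es` is a finite walk (path) starting at `u`; `es = []` is the trivial path at `u`. -/
def IsWalkFrom (u : E.V) (es : List E.Ed) : Prop :=
  es.Chain' (fun e f => E.r e = E.s f) ∧ ∀ e ∈ es.head?, E.s e = u

/-- The terminal vertex (range) of the walk `es` starting at `u`. -/
def endVert (u : E.V) (es : List E.Ed) : E.V := es.getLast?.elim u E.r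

/-- The set of vertices on the walk `es` starting at `u`. -/
def walkVerts (u : E.V) (es : List E.Ed) : Set E.V :=
  insert u {v | ∃ e ∈ es, E.r e = v}

/-- An infinite path. -/
def IsInfPath (f : ℕ → E.Ed) : Prop := ∀ n, E.r (f n) = E.s (f (n + 1))

/-- The set of vertices on an infinite path. -/
def infVerts (f : ℕ → E.Ed) : Set E.V := Set.range fun n => E.s (f n)

/-- Elements of `E^{≤∞}`: finite walks or infinite paths. -/
inductive GPath (E : DGraph) : Type where
  | fin : E.V → List E.Ed → GPath E
  | inf : (ℕ → E.Ed) → GPath E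

/-- Membership in `E^{≤∞}`: a well-formed finite path ending in a sink or an infinite
emitter, or an infinite path. -/
def gmem : GPath E → Prop
  | .fin u es => E.IsWalkFrom u es ∧
      (E.IsSink (E.endVert u es) ∨ E.IsInfEmitter (E.endVert u es))
  | .inf f => E.IsInfPath f

/-- `p⁰`, the vertex set of an element of `E^{≤∞}`. -/
def gverts : GPath E → Set E.V
  | .fin u es => E.walkVerts u es
  | .inf f => E.infVerts f

/-- The graph `E` is cofinal. -/
def Cofinal : Prop :=
  ∀ v : E.V, ∀ p : GPath E, E.gmem p → ∃ w ∈ E.gverts p, E.Reaches v w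

/-- `es` is a cycle based at `u`. -/
def IsCycle (u : E.V) (es : List E.Ed) : Prop :=
  es ≠ [] ∧ E.IsWalkFrom u es ∧ E.endVert u es = u ∧ (es.map E.s).Nodup

/-- The cycle `es` (based at `u`) has an exit. -/
def HasExit (u : E.V) (es : List E.Ed) : Prop :=
  ∃ v ∈ E.walkVerts u es, ∃ e, E.s e = v ∧ e ∉ es

/-- An extreme cycle: a cycle with an exit such that `T(c⁰) ⊆ R(c⁰)`. -/
def IsExtremeCycle (u : E.V) (es : List E.Ed) : Prop :=
  E.IsCycle u es ∧ E.HasExit u es ∧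
    E.tree (E.walkVerts u es) ⊆ E.root (E.walkVerts u es)

/-- `v` lies on some cycle. -/
def OnCycle (v : E.V) : Prop := ∃ u es, E.IsCycle u es ∧ v ∈ E.walkVerts u es

/-- A terminal (infinite) path. -/
def IsTerminalPath (f : ℕ → E.Ed) : Prop :=
  E.IsInfPath f ∧
  (∀ v ∈ E.tree (E.infVerts f), ¬ E.IsInfEmitter v ∧ ¬ E.OnCycle v) ∧
  (∀ g : ℕ → E.Ed, E.IsInfPath g → E.s (g 0) ∈ E.infVerts f →
      E.tree (E.infVerts g) ⊆ E.root (E.infVerts g))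

/-- A terminal vertex: a sink, a vertex on a cycle without exits, a vertex on an
extreme cycle, or a vertex on a terminal path. -/
def IsTerminalVert (v : E.V) : Prop :=
  E.IsSink v ∨
  (∃ u es, E.IsCycle u es ∧ ¬ E.HasExit u es ∧ v ∈ E.walkVerts u es) ∨
  (∃ u es, E.IsExtremeCycle u es ∧ v ∈ E.walkVerts u es) ∨
  (∃ f, E.IsTerminalPath f ∧ v ∈ E.infVerts f)

/-- `p ∼ q` for elements of `E^{≤∞}`: `R(p⁰) = R(q⁰)`. -/
def pequiv (p q : GPath E) : Prop := E.root (E.gverts p) = E.root (E.gverts q)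

/-- `v ≈ w` for terminal vertices. -/
def approx (v w : E.V) : Prop :=
  E.IsTerminalVert v ∧ E.IsTerminalVert w ∧
  ∃ p q : GPath E, E.gmem p ∧ E.gmem q ∧ v ∈ E.gverts p ∧ w ∈ E.gverts q ∧ E.pequiv p q

/-- The cluster of a terminal vertex `v`: its `≈`-equivalence class. -/
def cluster (v : E.V) : Set E.V := {w | E.approx v w}

/-- `C` is a cluster of `E`. -/
def IsCluster (C : Set E.V) : Prop := ∃ v, E.IsTerminalVert v ∧ C = E.cluster v

/-- `Ter(E)`: the saturated closure of the set of terminal vertices. -/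
def Ter : Set E.V := E.satClosure {v | E.IsTerminalVert v}

/-- The set `B_H` of breaking vertices of a (hereditary and saturated) set `H`. -/
def breaking (H : Set E.V) : Set E.V :=
  {v | v ∉ H ∧ E.IsInfEmitter v ∧
    {e | E.s e = v ∧ E.r e ∉ H}.Nonempty ∧ {e | E.s e = v ∧ E.r e ∉ H}.Finite}

/-- `(H, S)` is an admissible pair. -/
def Admissible (H S : Set E.V) : Prop :=
  E.Hereditary H ∧ E.Saturated H ∧ S ⊆ E.breaking H

end DGraph
namespace DGraph

variable (E : DGraph)

/-- The set `B_H^G`. -/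
def BHG (H G : Set E.V) : Set E.V :=
  {v | v ∉ H ∧ E.IsInfEmitter v ∧
    {e | E.s e = v ∧ E.r e ∈ G \ H}.Nonempty ∧ {e | E.s e = v ∧ E.r e ∈ G \ H}.Finite}

/-- The set `F₁(G−H, T−S)` of paths (recorded as nonempty edge lists). -/
def F1 (H S G T : Set E.V) : Set (List E.Ed) :=
  {es | es ≠ [] ∧ es.Chain' (fun e f => E.r e = E.s f) ∧
    ∀ e ∈ es.getLast?, E.r e ∈ G \ H ∧ E.s e ∉ (G \ H) ∪ (T \ S)}

/-- The set `F₂(G−H, T−S)` of paths (recorded as nonempty edge lists). -/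
def F2 (S T : Set E.V) : Set (List E.Ed) :=
  {es | es ≠ [] ∧ es.Chain' (fun e f => E.r e = E.s f) ∧
    ∀ e ∈ es.getLast?, E.r e ∈ T \ S}

/-- Raw vertices of the porcupine-quotient graph: old vertices `v`, vertices `w^p`,
and vertices `v'`. -/
inductive PQV (E : DGraph) : Type where
  | old : E.V → PQV E
  | wp : List E.Ed → PQV E
  | pr : E.V → PQV E

/-- Raw edges of the porcupine-quotient graph: old edges `e`, edges `f^p`,
and edges `e'`. -/
inductive PQE (E : DGraph) : Type where
  | old : E.Ed → PQE E
  | fp : List E.Ed → PQE E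
  | pr : E.Ed → PQE E

/-- Validity of a raw porcupine-quotient vertex. -/
def PQVok (H S G T : Set E.V) : PQV E → Prop
  | .old v => v ∈ (G \ H) ∪ (T \ S)
  | .wp es => es ∈ E.F1 H S G T ∪ E.F2 S T
  | .pr v => v ∈ ((G ∪ T) \ S) ∩ E.BHG H G

/-- Validity of a raw porcupine-quotient edge. -/
def PQEok (H S G T : Set E.V) : PQE E → Prop
  | .old e => E.r e ∈ G \ H ∧ E.s e ∈ (G \ H) ∪ (T \ S)
  | .fp es => es ∈ E.F1 H S G T ∪ E.F2 S T
  | .pr e => E.r e ∈ ((G ∪ T) \ S) ∩ E.BHG H G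

open Classical in
/-- The source of a raw porcupine-quotient edge. -/
noncomputable def PQsrc (H S G T : Set E.V) : PQE E → PQV E
  | .old e => .old (E.s e)
  | .fp es => .wp es
  | .pr e => if E.s e ∈ (G \ H) ∪ (T \ S) then .old (E.s e) else .wp [e]

/-- The range of a raw porcupine-quotient edge. -/
def PQrng : PQE E → PQV E
  | .old e => .old (E.r e)
  | .fp [] => .wp []
  | .fp [e] => .old (E.r e)
  | .fp (_ :: f :: q) => .wp (f :: q)
  | .pr e => .pr (E.r e)

theorem PQsrc_ok {H S G T : Set E.V} {x : PQE E} (hx : E.PQEok H S G T x) :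
    E.PQVok H S G T (E.PQsrc H S G T x) := by
  classical
  cases x with
  | old e => exact hx.2
  | fp es => exact hx
  | pr e =>
    obtain ⟨hGT, hB⟩ := hx
    show E.PQVok H S G T (if E.s e ∈ (G \ H) ∪ (T \ S) then .old (E.s e) else .wp [e])
    by_cases h : E.s e ∈ (G \ H) ∪ (T \ S)
    · rw [if_pos h]; exact h
    · rw [if_neg h]
      by_cases hG : E.r e ∈ G
      · refine Or.inl ⟨by simp, List.isChain_singleton e, ?_⟩
        intro a ha
        simp only [List.getLast?_singleton, Option.mem_some_iff] at ha
        subst ha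
        exact ⟨⟨hG, hB.1⟩, h⟩
      · refine Or.inr ⟨by simp, List.isChain_singleton e, ?_⟩
        intro a ha
        simp only [List.getLast?_singleton, Option.mem_some_iff] at ha
        subst ha
        exact ⟨hGT.1.resolve_left hG, hGT.2⟩

theorem PQrng_ok {H S G T : Set E.V} {x : PQE E} (hx : E.PQEok H S G T x) :
    E.PQVok H S G T (E.PQrng x) := by
  cases x with
  | old e => exact Or.inl hx.1
  | pr e => exact hx
  | fp es =>
    cases es with
    | nil =>
      rcases hx with h1 | h2
      · exact absurd rfl h1.1
      · exact absurd rfl h2.1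
    | cons e es' =>
      cases es' with
      | nil =>
        rcases hx with h1 | h2
        · have := h1.2.2 e (by simp [List.getLast?_singleton])
          exact Or.inl this.1
        · have := h2.2.2 e (by simp [List.getLast?_singleton])
          exact Or.inr this
      | cons f q =>
        show (f :: q) ∈ E.F1 H S G T ∪ E.F2 S T
        rcases hx with h1 | h2
        · refine Or.inl ⟨by simp, h1.2.1.tail, ?_⟩
          intro a ha
          exact h1.2.2 a (by rw [List.getLast?_cons_cons]; exact ha)
        · refine Or.inr ⟨by simp, h2.2.1.tail, ?_⟩
          intro a ha
          exact h2.2.2 a (by rw [List.getLast?_cons_cons]; exact ha)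

/-- The porcupine-quotient graph `(G,T)/(H,S)`. -/
noncomputable def PQ (H S G T : Set E.V) : DGraph where
  V := {x : PQV E // E.PQVok H S G T x}
  Ed := {x : PQE E // E.PQEok H S G T x}
  s := fun e => ⟨E.PQsrc H S G T e.1, E.PQsrc_ok e.2⟩
  r := fun e => ⟨E.PQrng e.1, E.PQrng_ok e.2⟩

/-- The order on admissible pairs: `(H,S) ≤ (G,T)` iff `H ⊆ G` and `S ⊆ G ∪ T`. -/
def pairLE {α : Type} (p q : Set α × Set α) : Prop := p.1 ⊆ q.1 ∧ p.2 ⊆ q.1 ∪ q.2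

/-- Strict order on admissible pairs. -/
def pairLT {α : Type} (p q : Set α × Set α) : Prop := pairLE p q ∧ p ≠ q

/-- `E` has a composition series: a finite chain of admissible pairs from `(∅,∅)`
to `(E⁰,∅)` whose consecutive porcupine-quotients are cofinal. -/
def HasCompSeries : Prop :=
  ∃ (n : ℕ) (c : ℕ → Set E.V × Set E.V),
    c 0 = (∅, ∅) ∧ c n = (Set.univ, ∅) ∧
    (∀ i, i ≤ n → E.Admissible (c i).1 (c i).2) ∧
    (∀ i, i < n → pairLT (c i) (c (i + 1))) ∧
    (∀ i, i < n → (E.PQ (c i).1 (c i).2 (c (i + 1)).1 (c (i + 1)).2).Cofinal)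

end DGraph
namespace DGraph

section Lattice

variable {E : DGraph}

theorem pairLE_refl {α : Type} (p : Set α × Set α) : pairLE p p :=
  ⟨subset_rfl, fun _ hx => Or.inr hx⟩

theorem pairLE_trans {α : Type} {p q r : Set α × Set α} (h1 : pairLE p q) (h2 : pairLE q r) :
    pairLE p r := by
  refine ⟨h1.1.trans h2.1, fun x hx => ?_⟩
  rcases h1.2 hx with h | h
  · exact Or.inl (h2.1 h)
  · exact h2.2 h

theorem adm_snd_breaking {p : Set E.V × Set E.V} (hp : E.Admissible p.1 p.2) :
    p.2 ⊆ E.breaking p.1 := hp.2.2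

theorem pair_eq_of_le_le {p q : Set E.V × Set E.V}
    (hp : E.Admissible p.1 p.2) (hq : E.Admissible q.1 q.2)
    (h1 : pairLE p q) (h2 : pairLE q p) : p = q := by
  have e1 : p.1 = q.1 := Set.Subset.antisymm h1.1 h2.1
  have e2 : p.2 = q.2 := by
    apply Set.Subset.antisymm
    · intro v hv
      rcases h1.2 hv with h | h
      · exact absurd (e1 ▸ h) (hp.2.2 hv).1
      · exact h
    · intro v hv
      rcases h2.2 hv with h | h
      · exact absurd (e1.symm ▸ h) (hq.2.2 hv).1
      · exact h
  exact Prod.ext e1 e2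

theorem her_adj {W : Set E.V} (hW : E.Hereditary W) {e : E.Ed} (h : E.s e ∈ W) :
    E.r e ∈ W :=
  hW _ h _ (Relation.ReflTransGen.single ⟨e, rfl, rfl⟩)

/-- The meet of two pairs. -/
def meetP (E : DGraph) (p q : Set E.V × Set E.V) : Set E.V × Set E.V :=
  (p.1 ∩ q.1, (p.1 ∪ p.2) ∩ (q.1 ∪ q.2) ∩ E.breaking (p.1 ∩ q.1))

theorem meetP_admissible {p q : Set E.V × Set E.V}
    (hp : E.Admissible p.1 p.2) (hq : E.Admissible q.1 q.2) :
    E.Admissible (E.meetP p q).1 (E.meetP p q).2 := by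
  refine ⟨?_, ?_, fun v hv => hv.2⟩
  · intro u hu v huv
    exact ⟨hp.1 u hu.1 v huv, hq.1 u hu.2 v huv⟩
  · intro v hreg hall
    exact ⟨hp.2.1 v hreg fun e he => (hall e he).1, hq.2.1 v hreg fun e he => (hall e he).2⟩

theorem meetP_le_left {p q : Set E.V × Set E.V} : pairLE (E.meetP p q) p :=
  ⟨Set.inter_subset_left, fun v hv => hv.1.1⟩

theorem meetP_le_right {p q : Set E.V × Set E.V} : pairLE (E.meetP p q) q :=
  ⟨Set.inter_subset_right, fun v hv => hv.1.2⟩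

theorem meetP_glb {p q r : Set E.V × Set E.V}
    (hp : E.Admissible p.1 p.2) (hq : E.Admissible q.1 q.2) (hr : E.Admissible r.1 r.2)
    (h1 : pairLE r p) (h2 : pairLE r q) : pairLE r (E.meetP p q) := by
  refine ⟨fun v hv => ⟨h1.1 hv, h2.1 hv⟩, fun v hv => ?_⟩
  by_cases hM : v ∈ p.1 ∩ q.1
  · exact Or.inl hM
  · refine Or.inr ⟨⟨h1.2 hv, h2.2 hv⟩, hM, (hr.2.2 hv).2.1, ?_, ?_⟩
    · -- nonempty
      by_contra hne
      rw [Set.not_nonempty_iff_eq_empty] at hne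
      have hall : ∀ e, E.s e = v → E.r e ∈ p.1 ∩ q.1 := by
        intro e he
        by_contra hc
        exact absurd (show e ∈ {e | E.s e = v ∧ E.r e ∉ p.1 ∩ q.1} from ⟨he, hc⟩)
          (by rw [hne]; exact Set.notMem_empty e)
      have hvp : v ∈ p.1 := by
        rcases h1.2 hv with h | h
        · exact h
        · obtain ⟨e, he1, he2⟩ := (hp.2.2 h).2.2.1
          exact absurd (hall e he1).1 he2
      have hvq : v ∈ q.1 := by
        rcases h2.2 hv with h | h
        · exact h
        · obtain ⟨e, he1, he2⟩ := (hq.2.2 h).2.2.1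
          exact absurd (hall e he1).2 he2
      exact hM ⟨hvp, hvq⟩
    · -- finite
      apply ((hr.2.2 hv).2.2.2).subset
      intro e he
      refine ⟨he.1, fun hc => he.2 ⟨h1.1 hc, h2.1 hc⟩⟩

/-- Closure used to define the join of two pairs. -/
inductive JoinC (E : DGraph) (p q : Set E.V × Set E.V) : E.V → Prop
  | base1 {v : E.V} : v ∈ p.1 → JoinC E p q v
  | base2 {v : E.V} : v ∈ q.1 → JoinC E p q v
  | step (e : E.Ed) : JoinC E p q (E.s e) → JoinC E p q (E.r e)
  | sat {v : E.V} : E.IsRegular v → (∀ e, E.s e = v → JoinC E p q (E.r e)) → JoinC E p q v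
  | brk {v : E.V} : v ∈ p.2 ∪ q.2 → (∀ e, E.s e = v → JoinC E p q (E.r e)) → JoinC E p q v

/-- The join of two pairs. -/
def joinP (E : DGraph) (p q : Set E.V × Set E.V) : Set E.V × Set E.V :=
  ({v | JoinC E p q v}, (p.1 ∪ p.2 ∪ q.1 ∪ q.2) ∩ E.breaking {v | JoinC E p q v})

theorem joinC_her {p q : Set E.V × Set E.V} : E.Hereditary {v | JoinC E p q v} := by
  intro u hu v huv
  induction huv with
  | refl => exact hu
  | tail _ hbc ih =>
      obtain ⟨e, he1, he2⟩ := hbc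
      subst he2
      exact JoinC.step e (he1.symm ▸ ih)

theorem joinP_admissible {p q : Set E.V × Set E.V} :
    E.Admissible (E.joinP p q).1 (E.joinP p q).2 :=
  ⟨joinC_her, fun _ hreg hall => JoinC.sat hreg fun e he => hall e he,
    fun _ hv => hv.2⟩

theorem joinP_le_left {p q : Set E.V × Set E.V} (hp : E.Admissible p.1 p.2) :
    pairLE p (E.joinP p q) := by
  refine ⟨fun v hv => JoinC.base1 hv, fun v hv => ?_⟩
  by_cases hJ : JoinC E p q v
  · exact Or.inl hJ
  · refine Or.inr ⟨Or.inl (Or.inl (Or.inr hv)), hJ, (hp.2.2 hv).2.1, ?_, ?_⟩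
    · by_contra hne
      rw [Set.not_nonempty_iff_eq_empty] at hne
      refine hJ (JoinC.brk (Or.inl hv) fun e he => ?_)
      by_contra hc
      exact absurd (show e ∈ {e | E.s e = v ∧ E.r e ∉ {v | JoinC E p q v}} from ⟨he, hc⟩)
        (by rw [hne]; exact Set.notMem_empty e)
    · apply ((hp.2.2 hv).2.2.2).subset
      intro e he
      exact ⟨he.1, fun hc => he.2 (JoinC.base1 hc)⟩

theorem joinP_le_right {p q : Set E.V × Set E.V} (hq : E.Admissible q.1 q.2) :
    pairLE q (E.joinP p q) := by
  refine ⟨fun v hv => JoinC.base2 hv, fun v hv => ?_⟩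
  by_cases hJ : JoinC E p q v
  · exact Or.inl hJ
  · refine Or.inr ⟨Or.inr hv, hJ, (hq.2.2 hv).2.1, ?_, ?_⟩
    · by_contra hne
      rw [Set.not_nonempty_iff_eq_empty] at hne
      refine hJ (JoinC.brk (Or.inr hv) fun e he => ?_)
      by_contra hc
      exact absurd (show e ∈ {e | E.s e = v ∧ E.r e ∉ {v | JoinC E p q v}} from ⟨he, hc⟩)
        (by rw [hne]; exact Set.notMem_empty e)
    · apply ((hq.2.2 hv).2.2.2).subset
      intro e he
      exact ⟨he.1, fun hc => he.2 (JoinC.base2 hc)⟩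

theorem joinC_subset {p q r : Set E.V × Set E.V} (hr : E.Admissible r.1 r.2)
    (h1 : pairLE p r) (h2 : pairLE q r) {v : E.V} (h : JoinC E p q v) : v ∈ r.1 := by
  induction h with
  | base1 h => exact h1.1 h
  | base2 h => exact h2.1 h
  | step e _ ih => exact her_adj hr.1 ih
  | sat hreg _ ih => exact hr.2.1 _ hreg fun e he => ih e he
  | @brk w hv _ ih =>
      have hv' : w ∈ r.1 ∪ r.2 := by
        rcases hv with h | h
        · exact h1.2 h
        · exact h2.2 h
      rcases hv' with h | h
      · exact h
      · obtain ⟨e, he1, he2⟩ := (hr.2.2 h).2.2.1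
        exact absurd (ih e he1) he2

theorem joinP_lub {p q r : Set E.V × Set E.V} (hr : E.Admissible r.1 r.2)
    (h1 : pairLE p r) (h2 : pairLE q r) : pairLE (E.joinP p q) r := by
  refine ⟨fun v hv => joinC_subset hr h1 h2 hv, fun v hv => ?_⟩
  rcases hv.1 with ((h | h) | h) | h
  · exact Or.inl (h1.1 h)
  · exact h1.2 h
  · exact Or.inl (h2.1 h)
  · exact h2.2 h

theorem modStar {x y a : Set E.V × Set E.V}
    (hx : E.Admissible x.1 x.2) (hy : E.Admissible y.1 y.2) (ha : E.Admissible a.1 a.2)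
    (hxy : pairLE x y)
    (hm : E.meetP x a = E.meetP y a) (hj : E.joinP x a = E.joinP y a) : x = y := by
  have hyJ : pairLE y (E.joinP x a) := by rw [hj]; exact joinP_le_left hy
  have lemA : ∀ z, z ∈ a.1 → z ∈ y.2 → z ∈ x.1 ∪ x.2 := by
    intro z hza hzy
    have hbz := hy.2.2 hzy
    have hzm : z ∈ (E.meetP y a).2 := by
      refine ⟨⟨Or.inr hzy, Or.inl hza⟩, fun hc => hbz.1 hc.1, hbz.2.1, ?_, ?_⟩
      · obtain ⟨e, he1, he2⟩ := hbz.2.2.1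
        exact ⟨e, he1, fun hc => he2 hc.1⟩
      · apply hbz.2.2.2.subset
        intro e he
        exact ⟨he.1, fun hc => he.2 ⟨hc, her_adj ha.1 (by rw [he.1]; exact hza)⟩⟩
    have hzm' : z ∈ (E.meetP x a).2 := by rw [hm]; exact hzm
    exact hzm'.1.1
  have lemB : ∀ z, z ∈ a.2 → z ∈ y.2 → z ∈ x.1 ∪ x.2 := by
    intro z hza hzy
    have hbza := ha.2.2 hza
    have hbzy := hy.2.2 hzy
    have hzm : z ∈ (E.meetP y a).2 := by
      refine ⟨⟨Or.inr hzy, Or.inr hza⟩, fun hc => hbza.1 hc.2, hbza.2.1, ?_, ?_⟩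
      · obtain ⟨e, he1, he2⟩ := hbzy.2.2.1
        exact ⟨e, he1, fun hc => he2 hc.1⟩
      · have hsub : {e | E.s e = z ∧ E.r e ∉ y.1 ∩ a.1} ⊆
            {e | E.s e = z ∧ E.r e ∉ y.1} ∪ {e | E.s e = z ∧ E.r e ∉ a.1} := by
          intro e he
          by_cases hca : E.r e ∈ a.1
          · exact Or.inl ⟨he.1, fun hc => he.2 ⟨hc, hca⟩⟩
          · exact Or.inr ⟨he.1, hca⟩
        exact (hbzy.2.2.2.union hbza.2.2.2).subset hsub
    have hzm' : z ∈ (E.meetP x a).2 := by rw [hm]; exact hzm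
    exact hzm'.1.1
  have hT : ∀ v, JoinC E x a v → ∀ z, E.Reaches v z → z ∈ y.1 → z ∈ x.1 := by
    intro v hv
    induction hv with
    | base1 h => exact fun z hz _ => hx.1 _ h _ hz
    | base2 h =>
        intro z hz hzy
        have hza : z ∈ a.1 := ha.1 _ h _ hz
        have h2 : z ∈ (E.meetP x a).1 := by rw [hm]; exact ⟨hzy, hza⟩
        exact h2.1
    | step e _ ih => exact fun z hz hzy => ih z (Relation.ReflTransGen.head ⟨e, rfl, rfl⟩ hz) hzy
    | @sat w hreg hall ih =>
        intro z hz hzy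
        rcases Relation.ReflTransGen.cases_head hz with rfl | ⟨b, hb, hbz⟩
        · refine hx.2.1 _ hreg fun e he => ?_
          have he' : E.s e = w := he
          exact ih e he' _ Relation.ReflTransGen.refl (her_adj hy.1 (by rw [he']; exact hzy))
        · obtain ⟨e, he1, he2⟩ := hb
          exact ih e he1 z (he2.symm ▸ hbz) hzy
    | @brk w hw hall ih =>
        intro z hz hzy
        rcases Relation.ReflTransGen.cases_head hz with rfl | ⟨b, hb, hbz⟩
        · have hranges : ∀ e, E.s e = w → E.r e ∈ x.1 := fun e he =>
            ih e he _ Relation.ReflTransGen.refl (her_adj hy.1 (by rw [he]; exact hzy))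
          rcases hw with h | h
          · obtain ⟨e, he1, he2⟩ := (hx.2.2 h).2.2.1
            exact absurd (hranges e he1) he2
          · have hba := ha.2.2 h
            have hwm : w ∈ (E.meetP y a).2 := by
              refine ⟨⟨Or.inl hzy, Or.inr h⟩, fun hc => hba.1 hc.2, hba.2.1, ?_, ?_⟩
              · obtain ⟨e, he1, he2⟩ := hba.2.2.1
                exact ⟨e, he1, fun hc => he2 hc.2⟩
              · apply hba.2.2.2.subset
                intro e he
                exact ⟨he.1, fun hc => he.2 ⟨hxy.1 (hranges e he.1), hc⟩⟩
            have hwm' : w ∈ (E.meetP x a).2 := by rw [hm]; exact hwm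
            rcases hwm'.1.1 with h' | h'
            · exact h'
            · obtain ⟨e, he1, he2⟩ := (hx.2.2 h').2.2.1
              exact absurd (hranges e he1) he2
        · obtain ⟨e, he1, he2⟩ := hb
          exact ih e he1 z (he2.symm ▸ hbz) hzy
  have hPhi : ∀ v, JoinC E x a v → ∀ z, E.Reaches v z → z ∈ y.2 → z ∈ x.1 ∪ x.2 := by
    intro v hv
    induction hv with
    | base1 h => exact fun z hz _ => Or.inl (hx.1 _ h _ hz)
    | base2 h => exact fun z hz hzy => lemA z (ha.1 _ h _ hz) hzy
    | step e _ ih => exact fun z hz hzy => ih z (Relation.ReflTransGen.head ⟨e, rfl, rfl⟩ hz) hzy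
    | @sat w hreg hall ih =>
        intro z hz hzy
        rcases Relation.ReflTransGen.cases_head hz with rfl | ⟨b, hb, hbz⟩
        · exact absurd hreg.2 (hy.2.2 hzy).2.1
        · obtain ⟨e, he1, he2⟩ := hb
          exact ih e he1 z (he2.symm ▸ hbz) hzy
    | @brk w hw hall ih =>
        intro z hz hzy
        rcases Relation.ReflTransGen.cases_head hz with rfl | ⟨b, hb, hbz⟩
        · rcases hw with h | h
          · exact Or.inr h
          · exact lemB w h hzy
        · obtain ⟨e, he1, he2⟩ := hb
          exact ih e he1 z (he2.symm ▸ hbz) hzy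
  have hyx : pairLE y x := by
    constructor
    · intro v hvy
      exact hT v (hyJ.1 hvy) v Relation.ReflTransGen.refl hvy
    · intro v hvy
      rcases hyJ.2 hvy with h | h
      · exact hPhi v h v Relation.ReflTransGen.refl hvy
      · rcases h.1 with ((h' | h') | h') | h'
        · exact Or.inl h'
        · exact Or.inr h'
        · exact lemA v h' hvy
        · exact lemB v h' hvy
  exact pair_eq_of_le_le hx hy hxy hyx

end Lattice

end DGraph
namespace DGraph

section Tools

variable {F : DGraph}

theorem sink_or_inf_of_not_regular {v : F.V} (h : ¬ F.IsRegular v) :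
    F.IsSink v ∨ F.IsInfEmitter v := by
  rcases not_and_or.mp h with h | h
  · exact Or.inl (Set.not_nonempty_iff_eq_empty.mp h)
  · exact Or.inr h

theorem gmem_singleton {y : F.V} (hy : F.IsSink y ∨ F.IsInfEmitter y) :
    F.gmem (.fin y []) := by
  refine ⟨⟨List.isChain_nil, by intro e he; simp at he⟩, ?_⟩
  have h : F.endVert y [] = y := rfl
  rw [h]
  exact hy

theorem gverts_singleton {y w : F.V} (hw : w ∈ F.gverts (.fin y [])) : w = y := by
  rcases hw with h | h
  · exact h
  · obtain ⟨e, he, _⟩ := h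
    simp at he

theorem not_cofinal_of_sep (x y : F.V) (hy : F.IsSink y ∨ F.IsInfEmitter y)
    (hxy : ¬ F.Reaches x y) : ¬ F.Cofinal := by
  intro hc
  obtain ⟨w, hw, hr⟩ := hc x (.fin y []) (gmem_singleton hy)
  rw [gverts_singleton hw] at hr
  exact hxy hr

theorem reaches_sink_eq {y z : F.V} (hy : F.IsSink y) (h : F.Reaches y z) : z = y := by
  rcases Relation.ReflTransGen.cases_head h with h' | ⟨b, hb, _⟩
  · exact h'.symm
  · obtain ⟨e, he, _⟩ := hb
    have hy' : F.emits y = ∅ := hy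
    exact absurd (show e ∈ F.emits y from he) (by rw [hy']; exact Set.notMem_empty e)

theorem not_cofinal_of_escape (A : Set F.V) (x₀ : F.V) (hx₀ : x₀ ∈ A)
    (hesc : ∀ x ∈ A, F.IsRegular x → ∃ e, F.s e = x ∧ F.r e ∈ A)
    (x : F.V) (hx : ∀ w ∈ A, ¬ F.Reaches x w) : ¬ F.Cofinal := by
  intro hc
  by_cases hall : ∀ v ∈ A, F.IsRegular v
  · have hstep : ∀ v : {v // v ∈ A}, ∃ e, F.s e = v.1 ∧ F.r e ∈ A := fun v =>
      hesc v.1 v.2 (hall v.1 v.2)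
    let nxt : {v // v ∈ A} → {v // v ∈ A} := fun v =>
      ⟨F.r (Classical.choose (hstep v)), (Classical.choose_spec (hstep v)).2⟩
    let g : ℕ → {v // v ∈ A} := fun n => nxt^[n] ⟨x₀, hx₀⟩
    let f : ℕ → F.Ed := fun n => Classical.choose (hstep (g n))
    have hsrc : ∀ n, F.s (f n) = (g n).1 := fun n => (Classical.choose_spec (hstep (g n))).1
    have hgsucc : ∀ n, g (n + 1) = nxt (g n) := fun n => Function.iterate_succ_apply' nxt n _
    have hinf : F.IsInfPath f := by
      intro n
      rw [hsrc (n + 1), hgsucc n]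
    obtain ⟨w, hw, hr⟩ := hc x (.inf f) hinf
    obtain ⟨n, rfl⟩ := hw
    refine hx _ ?_ hr
    show F.s (f n) ∈ A
    rw [hsrc n]
    exact (g n).2
  · push_neg at hall
    obtain ⟨v, hvA, hvr⟩ := hall
    obtain ⟨w, hw, hr⟩ := hc x (.fin v []) (gmem_singleton (sink_or_inf_of_not_regular hvr))
    rw [gverts_singleton hw] at hr
    exact hx v hvA hr

end Tools

section PQTools

variable {E : DGraph} {H S G T : Set E.V}

theorem pq_src_ne_pr (e : (E.PQ H S G T).Ed) (w : E.V)
    (h : ((E.PQ H S G T).s e).1 = PQV.pr w) : False := by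
  obtain ⟨x, hx⟩ := e
  have hv : E.PQsrc H S G T x = PQV.pr w := h
  cases x with
  | old e' => exact (by injection hv)
  | fp es => exact (by injection hv)
  | pr e' =>
      by_cases hc : E.s e' ∈ (G \ H) ∪ (T \ S)
      · rw [PQsrc, if_pos hc] at hv
        exact (by injection hv)
      · rw [PQsrc, if_neg hc] at hv
        exact (by injection hv)

theorem pq_pr_sink {w : E.V} (hw : E.PQVok H S G T (PQV.pr w)) :
    (E.PQ H S G T).IsSink ⟨PQV.pr w, hw⟩ := by
  apply Set.eq_empty_iff_forall_notMem.mpr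
  intro e he
  exact pq_src_ne_pr e w (congrArg Subtype.val (show (E.PQ H S G T).s e = _ from he))

theorem pq_reach_class {W : Set E.V} (hW : E.Hereditary W)
    {x y : (E.PQ H S G T).V} (hr : (E.PQ H S G T).Reaches x y)
    (hx : (∃ u ∈ W, x.1 = PQV.old u) ∨ (∃ u ∈ W, x.1 = PQV.pr u)) :
    (∃ u ∈ W, y.1 = PQV.old u) ∨ (∃ u ∈ W, y.1 = PQV.pr u) := by
  induction hr with
  | refl => exact hx
  | @tail b c _ hbc ih =>
      obtain ⟨e, he1, he2⟩ := hbc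
      subst he2
      obtain ⟨x', hx'⟩ := e
      cases x' with
      | old e' =>
          have hb : b.1 = PQV.old (E.s e') := congrArg Subtype.val he1.symm
          rcases ih with ⟨u, huW, hu⟩ | ⟨u, huW, hu⟩
          · rw [hb] at hu
            injection hu with hh
            refine Or.inl ⟨E.r e', her_adj hW (by rw [hh]; exact huW), rfl⟩
          · rw [hb] at hu
            exact (by injection hu)
      | fp es =>
          have hb : b.1 = PQV.wp es := congrArg Subtype.val he1.symm
          rcases ih with ⟨u, huW, hu⟩ | ⟨u, huW, hu⟩ <;> rw [hb] at hu <;>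
            exact (by injection hu)
      | pr e' =>
          by_cases hcnd : E.s e' ∈ (G \ H) ∪ (T \ S)
          · have hb : b.1 = PQV.old (E.s e') := by
              rw [← he1]
              show E.PQsrc H S G T (PQE.pr e') = _
              rw [PQsrc, if_pos hcnd]
            rcases ih with ⟨u, huW, hu⟩ | ⟨u, huW, hu⟩
            · rw [hb] at hu
              injection hu with hh
              refine Or.inr ⟨E.r e', her_adj hW (by rw [hh]; exact huW), rfl⟩
            · rw [hb] at hu
              exact (by injection hu)
          · have hb : b.1 = PQV.wp [e'] := by
              rw [← he1]
              show E.PQsrc H S G T (PQE.pr e') = _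
              rw [PQsrc, if_neg hcnd]
            rcases ih with ⟨u, huW, hu⟩ | ⟨u, huW, hu⟩ <;> rw [hb] at hu <;>
              exact (by injection hu)

theorem pq_old_out {w : E.V} {hw : E.PQVok H S G T (PQV.old w)} {e : (E.PQ H S G T).Ed}
    (he : (E.PQ H S G T).s e = ⟨PQV.old w, hw⟩) :
    (∃ e', e.1 = PQE.old e' ∧ E.s e' = w ∧ E.r e' ∈ G \ H) ∨
    (∃ e', e.1 = PQE.pr e' ∧ E.s e' = w ∧ E.r e' ∈ ((G ∪ T) \ S) ∩ E.BHG H G) := by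
  obtain ⟨x, hx⟩ := e
  have hv : E.PQsrc H S G T x = PQV.old w := congrArg Subtype.val he
  cases x with
  | old e' =>
      left
      have hh : E.s e' = w := by injection hv
      exact ⟨e', rfl, hh, hx.1⟩
  | fp es => exact (by injection hv)
  | pr e' =>
      right
      by_cases hcnd : E.s e' ∈ (G \ H) ∪ (T \ S)
      · rw [PQsrc, if_pos hcnd] at hv
        have hh : E.s e' = w := by injection hv
        exact ⟨e', rfl, hh, hx⟩
      · rw [PQsrc, if_neg hcnd] at hv
        exact (by injection hv)

theorem pq_mk_old_edge {w : E.V} (hw : E.PQVok H S G T (PQV.old w)) {e' : E.Ed}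
    (hs : E.s e' = w) (hr : E.r e' ∈ G \ H) :
    ∃ e : (E.PQ H S G T).Ed, e.1 = PQE.old e' ∧ (E.PQ H S G T).s e = ⟨PQV.old w, hw⟩ ∧
      ((E.PQ H S G T).r e).1 = PQV.old (E.r e') := by
  refine ⟨⟨PQE.old e', ⟨hr, by rw [hs]; exact hw⟩⟩, rfl, ?_, rfl⟩
  apply Subtype.ext
  show PQV.old (E.s e') = PQV.old w
  rw [hs]

theorem pq_mk_pr_edge {w : E.V} (hw : E.PQVok H S G T (PQV.old w)) {e' : E.Ed}
    (hs : E.s e' = w) (hr : E.r e' ∈ ((G ∪ T) \ S) ∩ E.BHG H G) :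
    ∃ e : (E.PQ H S G T).Ed, e.1 = PQE.pr e' ∧ (E.PQ H S G T).s e = ⟨PQV.old w, hw⟩ ∧
      ((E.PQ H S G T).r e).1 = PQV.pr (E.r e') := by
  refine ⟨⟨PQE.pr e', hr⟩, rfl, ?_, rfl⟩
  apply Subtype.ext
  show E.PQsrc H S G T (PQE.pr e') = PQV.old w
  rw [PQsrc, if_pos (by rw [hs]; exact hw)]
  rw [hs]

theorem pq_old_sink {w : E.V} (hw : E.PQVok H S G T (PQV.old w))
    (h1 : ∀ e', E.s e' = w → E.r e' ∉ G \ H)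
    (h2 : ∀ e', E.s e' = w → E.r e' ∉ ((G ∪ T) \ S) ∩ E.BHG H G) :
    (E.PQ H S G T).IsSink ⟨PQV.old w, hw⟩ := by
  apply Set.eq_empty_iff_forall_notMem.mpr
  intro e he
  rcases pq_old_out (show (E.PQ H S G T).s e = _ from he) with ⟨e', _, hs, hr⟩ | ⟨e', _, hs, hr⟩
  · exact h1 e' hs hr
  · exact h2 e' hs hr

theorem pq_old_inf {w : E.V} (hw : E.PQVok H S G T (PQV.old w))
    (hinf : {e' | E.s e' = w ∧ E.r e' ∈ G \ H}.Infinite) :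
    (E.PQ H S G T).IsInfEmitter ⟨PQV.old w, hw⟩ := by
  have : Infinite ↥{e' | E.s e' = w ∧ E.r e' ∈ G \ H} := hinf.to_subtype
  apply Set.infinite_of_injective_forall_mem
    (f := fun e'' : ↥{e' | E.s e' = w ∧ E.r e' ∈ G \ H} =>
      (⟨PQE.old e''.1, ⟨e''.2.2, by rw [e''.2.1]; exact hw⟩⟩ : (E.PQ H S G T).Ed))
  · intro a b hab
    have hab' := congrArg Subtype.val hab
    injection hab' with hh
    exact Subtype.ext hh
  · intro a
    show (E.PQ H S G T).s _ = _
    apply Subtype.ext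
    show PQV.old (E.s a.1) = PQV.old w
    rw [a.2.1]

theorem pq_old_mset_finite {w : E.V} {hw : E.PQVok H S G T (PQV.old w)}
    (hreg : (E.PQ H S G T).IsRegular ⟨PQV.old w, hw⟩) :
    {e' | E.s e' = w ∧ E.r e' ∈ G \ H}.Finite := by
  by_contra hfin
  exact pq_old_inf hw hfin hreg.2

end PQTools

end DGraph
namespace DGraph

section StepB

variable {E : DGraph} {H S G T K R : Set E.V}

/-- A gpath of length one ending at a sink gives a cofinality witness. -/
theorem not_cofinal_of_edge_to_sink {F : DGraph} (x y : F.V) (e₀ : F.Ed)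
    (he₀ : F.s e₀ = y) (hsink : F.IsSink (F.r e₀))
    (hx1 : ¬ F.Reaches x y) (hx2 : ¬ F.Reaches x (F.r e₀)) : ¬ F.Cofinal := by
  intro hc
  have hmem : F.gmem (.fin y [e₀]) := by
    refine ⟨⟨List.isChain_singleton e₀, ?_⟩, ?_⟩
    · intro e he
      rw [List.head?_cons, Option.mem_some_iff] at he
      subst he
      exact he₀
    · have hend : F.endVert y [e₀] = F.r e₀ := by
        show ([e₀].getLast?).elim y F.r = F.r e₀
        rw [List.getLast?_singleton]
        rfl
      rw [hend]
      exact Or.inl hsink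
  obtain ⟨w, hw, hr⟩ := hc x (.fin y [e₀]) hmem
  rcases hw with rfl | hw
  · exact hx1 hr
  · obtain ⟨e, he, hre⟩ := hw
    rw [List.mem_singleton] at he
    subst he
    rw [hre] at hx2
    exact hx2 hr

theorem stepB (hHS : E.Admissible H S) (hKR : E.Admissible K R) (hGT : E.Admissible G T)
    (h1 : pairLE (H, S) (K, R)) (h2 : pairLE (K, R) (G, T))
    (hne1 : (H, S) ≠ (K, R)) (hne2 : (K, R) ≠ (G, T))
    (hcof : (E.PQ H S G T).Cofinal) : False := by
  have hHK : H ⊆ K := h1.1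
  have hKG : K ⊆ G := h2.1
  by_cases hKH : ∃ u₀, u₀ ∈ K ∧ u₀ ∉ H
  · -- CASE (l1)
    obtain ⟨u₀, hu₀K, hu₀H⟩ := hKH
    have hu₀v : E.PQVok H S G T (PQV.old u₀) := Or.inl ⟨hKG hu₀K, hu₀H⟩
    set x : (E.PQ H S G T).V := ⟨PQV.old u₀, hu₀v⟩ with hxdef
    have hreach : ∀ y, (E.PQ H S G T).Reaches x y →
        (∃ u ∈ K, y.1 = PQV.old u) ∨ (∃ u ∈ K, y.1 = PQV.pr u) := fun y hy =>
      pq_reach_class hKR.1 hy (Or.inl ⟨u₀, hu₀K, rfl⟩)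
    by_cases hprK : ∀ w ∈ ((G ∪ T) \ S) ∩ E.BHG H G, w ∈ K
    · -- prset ⊆ K
      by_cases hGK : ∃ w₀, w₀ ∈ G ∧ w₀ ∉ K
      · -- (u1) : escape within old (G \ K)
        obtain ⟨w₀, hw₀G, hw₀K⟩ := hGK
        set A : Set (E.PQ H S G T).V :=
          {y | ∃ w, w ∈ G ∧ w ∉ K ∧ y.1 = PQV.old w} with hAdef
        have hesc : ∀ y ∈ A, (E.PQ H S G T).IsRegular y →
            ∃ e, (E.PQ H S G T).s e = y ∧ (E.PQ H S G T).r e ∈ A := by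
          rintro ⟨yv, hyok⟩ ⟨w, hwG, hwK, hyval⟩ hyreg
          dsimp only at hyval
          subst hyval
          -- find an E-edge from w into (G \ H) \ K
          have hescE : ∃ e', E.s e' = w ∧ E.r e' ∈ G \ H ∧ E.r e' ∉ K := by
            by_contra hno
            push_neg at hno
            -- there is at least one E-edge from w into G \ H
            obtain ⟨e₀, he₀⟩ := hyreg.1
            have hm1 : ∃ e₁, E.s e₁ = w ∧ E.r e₁ ∈ G \ H := by
              rcases pq_old_out (show (E.PQ H S G T).s e₀ = _ from he₀) with
                ⟨e', _, hs, hr⟩ | ⟨e', _, hs, hr⟩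
              · exact ⟨e', hs, hr⟩
              · exact ⟨e', hs, her_adj hGT.1 (by rw [hs]; exact hwG), hr.2.1⟩
            obtain ⟨e₁, hs₁, hr₁⟩ := hm1
            have hallK : ∀ e'', E.s e'' = w → E.r e'' ∈ K := by
              intro e'' hs''
              have hrG : E.r e'' ∈ G := her_adj hGT.1 (by rw [hs'']; exact hwG)
              by_cases hrH : E.r e'' ∈ H
              · exact hHK hrH
              · exact hno e'' hs'' ⟨hrG, hrH⟩
            by_cases hwreg : E.IsRegular w
            · exact hwK (hKR.2.1 w hwreg fun e'' he'' => hallK e'' he'')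
            · rcases sink_or_inf_of_not_regular hwreg with hsink | hinf
              · exact absurd (show e₁ ∈ E.emits w from hs₁)
                  (by rw [show E.emits w = ∅ from hsink]; exact Set.notMem_empty e₁)
              · have hfin := pq_old_mset_finite hyreg
                have hwBHG : w ∈ E.BHG H G :=
                  ⟨fun h => hwK (hHK h), hinf, ⟨e₁, hs₁, hr₁⟩, hfin⟩
                have hwS : w ∉ S := by
                  intro hS
                  rcases h1.2 hS with h | h
                  · exact hwK h
                  · obtain ⟨e'', hs'', hr''⟩ := (hKR.2.2 h).2.2.1
                    exact hr'' (hallK e'' hs'')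
                exact hwK (hprK w ⟨⟨Or.inl hwG, hwS⟩, hwBHG⟩)
          obtain ⟨e', hs, hrGH, hrK⟩ := hescE
          obtain ⟨e, _, hesrc, herng⟩ := pq_mk_old_edge hyok hs hrGH
          exact ⟨e, hesrc, ⟨E.r e', hrGH.1, hrK, herng⟩⟩
        have hx₀A : (⟨PQV.old w₀, Or.inl ⟨hw₀G, fun h => hw₀K (hHK h)⟩⟩ :
            (E.PQ H S G T).V) ∈ A := ⟨w₀, hw₀G, hw₀K, rfl⟩
        refine not_cofinal_of_escape A _ hx₀A hesc x ?_ hcof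
        intro y hyA hr
        obtain ⟨w, _, hwK, hyval⟩ := hyA
        rcases hreach y hr with ⟨u, huK, hu⟩ | ⟨u, huK, hu⟩
        · rw [hyval] at hu
          injection hu with hh
          exact hwK (hh ▸ huK)
        · rw [hyval] at hu
          exact (by injection hu)
      · -- (u2) : K = G
        push_neg at hGK
        have hKeqG : K = G := Set.Subset.antisymm hKG fun w hw => hGK w hw
        have hRT : R ⊆ T := by
          intro v hv
          rcases h2.2 hv with h | h
          · exact absurd (hKeqG ▸ h) (hKR.2.2 hv).1
          · exact h
        have hRneT : R ≠ T := fun h => hne2 (by rw [hKeqG, h])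
        obtain ⟨w₁, hw₁T, hw₁R⟩ := Set.not_subset.mp fun hTR =>
          hRneT (Set.Subset.antisymm hRT hTR)
        have hw₁G : w₁ ∉ G := (hGT.2.2 hw₁T).1
        have hw₁K : w₁ ∉ K := fun h => hw₁G (hKeqG ▸ h)
        have hw₁S : w₁ ∉ S := by
          intro hS
          rcases h1.2 hS with h | h
          · exact hw₁K h
          · exact hw₁R h
        have hval : E.PQVok H S G T (PQV.old w₁) := Or.inr ⟨hw₁T, hw₁S⟩
        have hinfE : E.IsInfEmitter w₁ := (hGT.2.2 hw₁T).2.1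
        have hnr : ¬ (E.PQ H S G T).Reaches x ⟨PQV.old w₁, hval⟩ := by
          intro hr
          rcases hreach _ hr with ⟨u, huK, hu⟩ | ⟨u, huK, hu⟩
          · have hu' : PQV.old w₁ = PQV.old u := hu
            injection hu' with hh
            exact hw₁K (hh ▸ huK)
          · exact (by injection (show PQV.old w₁ = PQV.pr u from hu))
        by_cases hfin : {e' | E.s e' = w₁ ∧ E.r e' ∈ G \ H}.Finite
        · by_cases hne : {e' | E.s e' = w₁ ∧ E.r e' ∈ G \ H}.Nonempty
          · have hBHG : w₁ ∈ E.BHG H G :=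
              ⟨fun h => hw₁G (hKG (hHK h)), hinfE, hne, hfin⟩
            exact hw₁K (hprK w₁ ⟨⟨Or.inr hw₁T, hw₁S⟩, hBHG⟩)
          · rw [Set.not_nonempty_iff_eq_empty] at hne
            have hsink := pq_old_sink hval
              (fun e' hs hr => absurd (show e' ∈ {e' | E.s e' = w₁ ∧ E.r e' ∈ G \ H}
                from ⟨hs, hr⟩) (by rw [hne]; exact Set.notMem_empty e'))
              (fun e' hs hr => by
                have hrK : E.r e' ∈ K := hprK _ hr
                have hrH : E.r e' ∉ H := hr.2.1
                exact absurd (show e' ∈ {e' | E.s e' = w₁ ∧ E.r e' ∈ G \ H}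
                  from ⟨hs, ⟨hKG hrK, hrH⟩⟩) (by rw [hne]; exact Set.notMem_empty e'))
            exact not_cofinal_of_sep x _ (Or.inl hsink) hnr hcof
        · exact not_cofinal_of_sep x _ (Or.inr (pq_old_inf hval hfin)) hnr hcof
    · -- WIN1: some breaking vertex outside K
      push_neg at hprK
      obtain ⟨w, hwpr, hwK⟩ := hprK
      refine not_cofinal_of_sep x ⟨PQV.pr w, hwpr⟩ (Or.inl (pq_pr_sink hwpr)) ?_ hcof
      intro hr
      rcases hreach _ hr with ⟨u, huK, hu⟩ | ⟨u, huK, hu⟩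
      · exact (by injection (show PQV.pr w = PQV.old u from hu))
      · have hu' : PQV.pr w = PQV.pr u := hu
        injection hu' with hh
        exact hwK (hh ▸ huK)
  · -- CASE (l2) : K = H
    push_neg at hKH
    have hKeqH : K = H := Set.Subset.antisymm (fun u hu => hKH u hu) hHK
    have hSR : S ⊆ R := by
      intro v hv
      rcases h1.2 hv with h | h
      · exact absurd (hKeqH ▸ h) (hHS.2.2 hv).1
      · exact h
    have hSneR : S ≠ R := fun h => hne1 (by rw [hKeqH, h])
    obtain ⟨v₀, hv₀R, hv₀S⟩ := Set.not_subset.mp fun hRS =>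
      hSneR (Set.Subset.antisymm hSR hRS)
    have hv₀brk := hKR.2.2 hv₀R
    have hv₀H : v₀ ∉ H := fun h => hv₀brk.1 (hKeqH ▸ h)
    have hv₀inf : E.IsInfEmitter v₀ := hv₀brk.2.1
    have hv₀GT : v₀ ∈ G ∪ T := h2.2 hv₀R
    have hv₀val : E.PQVok H S G T (PQV.old v₀) := by
      rcases hv₀GT with h | h
      · exact Or.inl ⟨h, hv₀H⟩
      · exact Or.inr ⟨h, hv₀S⟩
    have hm₀fin : {e' | E.s e' = v₀ ∧ E.r e' ∈ G \ H}.Finite := by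
      apply hv₀brk.2.2.2.subset
      intro e he
      exact ⟨he.1, fun hc => he.2.2 (hKeqH ▸ hc)⟩
    by_cases hm₀ : {e' | E.s e' = v₀ ∧ E.r e' ∈ G \ H}.Nonempty
    · -- (l2a)
      obtain ⟨e₁, hs₁, hr₁⟩ := hm₀
      have hv₀BHG : v₀ ∈ E.BHG H G := ⟨hv₀H, hv₀inf, ⟨e₁, hs₁, hr₁⟩, hm₀fin⟩
      have hprv₀ok : E.PQVok H S G T (PQV.pr v₀) := ⟨⟨hv₀GT, hv₀S⟩, hv₀BHG⟩
      set prv₀ : (E.PQ H S G T).V := ⟨PQV.pr v₀, hprv₀ok⟩ with hprv₀def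
      by_cases hstuck : ∃ y : (E.PQ H S G T).V, (∃ e, (E.PQ H S G T).s e = y) ∧
          ∀ e, (E.PQ H S G T).s e = y → (E.PQ H S G T).r e = prv₀
      · obtain ⟨⟨yv, hyok⟩, ⟨e₀, he₀⟩, hally⟩ := hstuck
        cases yv with
        | wp es =>
            -- the f-edge out of a wp vertex does not end at a pr vertex
            have hfok : E.PQEok H S G T (PQE.fp es) := hyok
            have hfsrc : (E.PQ H S G T).s ⟨PQE.fp es, hfok⟩ = ⟨PQV.wp es, hyok⟩ :=
              Subtype.ext rfl
            have hcontr := congrArg Subtype.val (hally _ hfsrc)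
            cases es with
            | nil => exact (by injection hcontr)
            | cons e' es' =>
                cases es' with
                | nil => exact (by injection hcontr)
                | cons f' q' => exact (by injection hcontr)
        | pr u => exact pq_src_ne_pr e₀ u (congrArg Subtype.val he₀)
        | old u =>
            -- the out-edge must be a pr-edge to pr v₀, so there is an E-edge u → v₀
            have hrval := congrArg Subtype.val (hally e₀ he₀)
            rcases pq_old_out he₀ with ⟨e', hval', hs', hr'⟩ | ⟨e', hval', hs', hr'⟩
            · rw [show ((E.PQ H S G T).r e₀).1 = E.PQrng e₀.1 from rfl, hval'] at hrval
              exact (by injection hrval)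
            · rw [show ((E.PQ H S G T).r e₀).1 = E.PQrng e₀.1 from rfl, hval'] at hrval
              have hre' : E.r e' = v₀ := by injection hrval
              -- v₀ ∉ G
              have hv₀G : v₀ ∉ G := by
                intro hvG
                obtain ⟨ec, hcval, hcsrc, hcrng⟩ := pq_mk_old_edge hyok hs'
                  (show E.r e' ∈ G \ H by rw [hre']; exact ⟨hvG, hv₀H⟩)
                have := congrArg Subtype.val (hally ec hcsrc)
                rw [hcrng] at this
                exact (by injection this)
              have huG : u ∉ G := fun hG =>
                hv₀G (hre' ▸ her_adj hGT.1 (by rw [hs']; exact hG))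
              -- witness
              have hg₀ : E.r e₁ ∈ G \ H := hr₁
              refine not_cofinal_of_edge_to_sink
                (⟨PQV.old (E.r e₁), Or.inl hg₀⟩ : (E.PQ H S G T).V) _ e₀ he₀
                (by rw [hally e₀ he₀]; exact pq_pr_sink hprv₀ok) ?_ ?_ hcof
              · intro hr
                rcases pq_reach_class hGT.1 hr (Or.inl ⟨E.r e₁, hg₀.1, rfl⟩) with
                  ⟨u', hu'G, hu'⟩ | ⟨u', hu'G, hu'⟩
                · have : PQV.old u = PQV.old u' := hu'
                  injection this with hh
                  exact huG (hh ▸ hu'G)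
                · exact (by injection (show PQV.old u = PQV.pr u' from hu'))
              · rw [hally e₀ he₀]
                intro hr
                rcases pq_reach_class hGT.1 hr (Or.inl ⟨E.r e₁, hg₀.1, rfl⟩) with
                  ⟨u', hu'G, hu'⟩ | ⟨u', hu'G, hu'⟩
                · exact (by injection (show PQV.pr v₀ = PQV.old u' from hu'))
                · have : PQV.pr v₀ = PQV.pr u' := hu'
                  injection this with hh
                  exact hv₀G (hh ▸ hu'G)
      · -- no stuck vertex: escape avoiding pr v₀
        push_neg at hstuck
        refine not_cofinal_of_escape {y | y ≠ prv₀} (⟨PQV.old v₀, hv₀val⟩ :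
          (E.PQ H S G T).V) ?_ ?_ prv₀ ?_ hcof
        · intro hh
          exact (by injection (congrArg Subtype.val hh))
        · intro y hyA hyreg
          obtain ⟨e₀, he₀⟩ := hyreg.1
          obtain ⟨e, hse, hre⟩ := hstuck y ⟨e₀, he₀⟩
          exact ⟨e, hse, hre⟩
        · intro w hw hr
          exact hw (reaches_sink_eq (pq_pr_sink hprv₀ok) hr)
    · -- (l2b)
      have hv₀G : v₀ ∉ G := by
        intro hvG
        obtain ⟨e₂, hs₂, hr₂⟩ := hv₀brk.2.2.1
        exact hm₀ ⟨e₂, hs₂, ⟨her_adj hGT.1 (by rw [hs₂]; exact hvG),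
          fun h => hr₂ (hKeqH ▸ hHK h)⟩⟩
      have hv₀T : v₀ ∈ T := by
        rcases hv₀GT with h | h
        · exact absurd h hv₀G
        · exact h
      by_cases hGH : ∃ g₀, g₀ ∈ G \ H
      · obtain ⟨g₀, hg₀⟩ := hGH
        set x : (E.PQ H S G T).V := ⟨PQV.old g₀, Or.inl hg₀⟩ with hxdef
        by_cases hprv : ∃ e₃, E.s e₃ = v₀ ∧ E.r e₃ ∈ ((G ∪ T) \ S) ∩ E.BHG H G
        · obtain ⟨e₃, hs₃, hr₃⟩ := hprv
          have hr₃G : E.r e₃ ∉ G := fun hG =>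
            hm₀ ⟨e₃, hs₃, ⟨hG, hr₃.2.1⟩⟩
          refine not_cofinal_of_sep x (⟨PQV.pr (E.r e₃), hr₃⟩ : (E.PQ H S G T).V)
            (Or.inl (pq_pr_sink hr₃)) ?_ hcof
          intro hr
          rcases pq_reach_class hGT.1 hr (Or.inl ⟨g₀, hg₀.1, rfl⟩) with
            ⟨u', hu'G, hu'⟩ | ⟨u', hu'G, hu'⟩
          · exact (by injection (show PQV.pr (E.r e₃) = PQV.old u' from hu'))
          · have : PQV.pr (E.r e₃) = PQV.pr u' := hu'
            injection this with hh
            exact hr₃G (hh ▸ hu'G)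
        · push_neg at hprv
          have hsink := pq_old_sink hv₀val
            (fun e' hs hr => hm₀ ⟨e', hs, hr⟩) (fun e' hs hr => hprv e' hs hr)
          refine not_cofinal_of_sep x _ (Or.inl hsink) ?_ hcof
          intro hr
          rcases pq_reach_class hGT.1 hr (Or.inl ⟨g₀, hg₀.1, rfl⟩) with
            ⟨u', hu'G, hu'⟩ | ⟨u', hu'G, hu'⟩
          · have : PQV.old v₀ = PQV.old u' := hu'
            injection this with hh
            exact hv₀G (hh ▸ hu'G)
          · exact (by injection (show PQV.old v₀ = PQV.pr u' from hu'))
      · -- G \ H empty: two sinks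
        push_neg at hGH
        have hGsubH : ∀ g, g ∈ G → g ∈ H := fun g hg => by
          by_contra hc
          exact hGH g ⟨hg, hc⟩
        have hKeqG : K = G := Set.Subset.antisymm hKG fun g hg => hKeqH ▸ hGsubH g hg
        have hRT : R ⊆ T := by
          intro v hv
          rcases h2.2 hv with h | h
          · exact absurd (hKeqG ▸ h) (hKR.2.2 hv).1
          · exact h
        have hRneT : R ≠ T := fun h => hne2 (by rw [hKeqG, h])
        obtain ⟨w₁, hw₁T, hw₁R⟩ := Set.not_subset.mp fun hTR =>
          hRneT (Set.Subset.antisymm hRT hTR)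
        have hw₁G : w₁ ∉ G := (hGT.2.2 hw₁T).1
        have hw₁S : w₁ ∉ S := by
          intro hS
          rcases h1.2 hS with h | h
          · exact hw₁G (hKeqG ▸ h)
          · exact hw₁R h
        have hprempty : ∀ e' : E.Ed, E.r e' ∉ ((G ∪ T) \ S) ∩ E.BHG H G := by
          intro e' hr
          obtain ⟨e₄, hs₄, hr₄⟩ := hr.2.2.2.1
          exact hr₄.2 (hGsubH _ hr₄.1)
        have hsink₀ := pq_old_sink hv₀val
          (fun e' _ hr => hr.2 (hGsubH _ hr.1)) (fun e' _ hr => hprempty e' hr)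
        have hw₁val : E.PQVok H S G T (PQV.old w₁) := Or.inr ⟨hw₁T, hw₁S⟩
        have hsink₁ := pq_old_sink hw₁val
          (fun e' _ hr => hr.2 (hGsubH _ hr.1)) (fun e' _ hr => hprempty e' hr)
        refine not_cofinal_of_sep (⟨PQV.old v₀, hv₀val⟩ : (E.PQ H S G T).V)
          (⟨PQV.old w₁, hw₁val⟩ : (E.PQ H S G T).V) (Or.inl hsink₁) ?_ hcof
        intro hr
        have := reaches_sink_eq hsink₀ hr
        have hvals := congrArg Subtype.val this
        have : PQV.old w₁ = PQV.old v₀ := hvals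
        injection this with hh
        exact hw₁R (hh ▸ hv₀R)

end StepB

end DGraph
namespace DGraph

section Chains

variable {E : DGraph}

theorem no_increasing_chain
    (n : ℕ) (d : ℕ → Set E.V × Set E.V)
    (hdadm : ∀ i, i ≤ n → E.Admissible (d i).1 (d i).2)
    (hdlt : ∀ i, i < n → pairLT (d i) (d (i + 1)))
    (hgap : ∀ i, i < n → ∀ e : Set E.V × Set E.V, E.Admissible e.1 e.2 →
      pairLE (d i) e → pairLE e (d (i + 1)) → e = d i ∨ e = d (i + 1))
    (hd0 : d 0 = (∅, ∅)) :
    ∀ m, m ≤ n → ∀ b : ℕ → Set E.V × Set E.V,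
      (∀ k, E.Admissible (b k).1 (b k).2) →
      (∀ k, pairLT (b k) (b (k + 1))) →
      (∀ k, pairLE (b k) (d m)) → False := by
  intro m
  induction m with
  | zero =>
      intro _ b _ hblt hble
      have hb0 : ∀ k, b k = (∅, ∅) := by
        intro k
        have h := hble k
        rw [hd0] at h
        have h1 : (b k).1 = ∅ := Set.subset_empty_iff.mp h.1
        have h2 : (b k).2 = ∅ := Set.subset_empty_iff.mp
          (by have := h.2; rwa [Set.empty_union] at this)
        exact Prod.ext h1 h2
      exact (hblt 0).2 (by rw [hb0 0, hb0 1])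
  | succ m ih =>
      intro hmn b hbadm hblt hble
      have hmn' : m ≤ n := Nat.le_of_succ_le hmn
      have hmlt : m < n := hmn
      have hdm : E.Admissible (d m).1 (d m).2 := hdadm m hmn'
      have hdm1 : E.Admissible (d (m + 1)).1 (d (m + 1)).2 := hdadm (m + 1) hmn
      have hjadm : ∀ k : ℕ, E.Admissible (E.joinP (b k) (d m)).1 (E.joinP (b k) (d m)).2 :=
        fun _ => joinP_admissible
      have hjle : ∀ k, pairLE (E.joinP (b k) (d m)) (d (m + 1)) := fun k =>
        joinP_lub hdm1 (hble k) (hdlt m hmlt).1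
      have hjmono : ∀ k l, k ≤ l →
          pairLE (E.joinP (b k) (d m)) (E.joinP (b l) (d m)) := by
        intro k l hkl
        induction hkl with
        | refl => exact pairLE_refl _
        | @step l' hkl' ihm =>
            refine pairLE_trans ihm (joinP_lub joinP_admissible ?_ (joinP_le_right hdm))
            exact pairLE_trans (hblt l').1 (joinP_le_left (hbadm (l' + 1)))
      have hconst : ∃ k₀, ∀ k, k₀ ≤ k →
          E.joinP (b k) (d m) = E.joinP (b k₀) (d m) := by
        by_cases hex : ∃ k₀, E.joinP (b k₀) (d m) = d (m + 1)
        · obtain ⟨k₀, hk₀⟩ := hex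
          refine ⟨k₀, fun k hk => ?_⟩
          rw [hk₀]
          apply pair_eq_of_le_le (hjadm k) hdm1 (hjle k)
          rw [← hk₀]
          exact hjmono k₀ k hk
        · push_neg at hex
          have hall : ∀ k, E.joinP (b k) (d m) = d m := fun k =>
            ((hgap m hmlt _ (hjadm k) (joinP_le_right hdm) (hjle k)).resolve_right (hex k))
          exact ⟨0, fun k _ => by rw [hall k, hall 0]⟩
      obtain ⟨k₀, hk₀⟩ := hconst
      refine ih hmn' (fun k => E.meetP (b (k + k₀)) (d m))
        (fun k => meetP_admissible (hbadm _) hdm) (fun k => ?_) (fun k => meetP_le_right)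
      have hk1 : k + 1 + k₀ = k + k₀ + 1 := by omega
      constructor
      · show pairLE (E.meetP (b (k + k₀)) (d m)) (E.meetP (b (k + 1 + k₀)) (d m))
        rw [hk1]
        exact meetP_glb (hbadm _) hdm (meetP_admissible (hbadm _) hdm)
          (pairLE_trans meetP_le_left (hblt (k + k₀)).1) meetP_le_right
      · show ¬ E.meetP (b (k + k₀)) (d m) = E.meetP (b (k + 1 + k₀)) (d m)
        rw [hk1]
        intro hmeq
        exact (hblt (k + k₀)).2 (modStar (hbadm _) (hbadm _) hdm (hblt (k + k₀)).1 hmeq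
          (by rw [hk₀ (k + k₀) (Nat.le_add_left _ _), hk₀ (k + k₀ + 1) (by omega)]))

theorem no_decreasing_chain
    (n : ℕ) (d : ℕ → Set E.V × Set E.V)
    (hdadm : ∀ i, i ≤ n → E.Admissible (d i).1 (d i).2)
    (hdlt : ∀ i, i < n → pairLT (d i) (d (i + 1)))
    (hgap : ∀ i, i < n → ∀ e : Set E.V × Set E.V, E.Admissible e.1 e.2 →
      pairLE (d i) e → pairLE e (d (i + 1)) → e = d i ∨ e = d (i + 1))
    (hdn : d n = (Set.univ, ∅)) :
    ∀ t, t ≤ n → ∀ b : ℕ → Set E.V × Set E.V,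
      (∀ k, E.Admissible (b k).1 (b k).2) →
      (∀ k, pairLT (b (k + 1)) (b k)) →
      (∀ k, pairLE (d (n - t)) (b k)) → False := by
  intro t
  induction t with
  | zero =>
      intro _ b hbadm hblt hble
      have hb0 : ∀ k, b k = (Set.univ, ∅) := by
        intro k
        have h := hble k
        rw [Nat.sub_zero, hdn] at h
        have h1 : (b k).1 = Set.univ := Set.eq_univ_of_univ_subset h.1
        have h2 : (b k).2 = ∅ := by
          apply Set.subset_empty_iff.mp
          intro v hv
          have := (hbadm k).2.2 hv
          rw [h1] at this
          exact absurd (Set.mem_univ v) this.1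
        exact Prod.ext h1 h2
      exact (hblt 0).2 (by rw [hb0 0, hb0 1])
  | succ t ih =>
      intro htn b hbadm hblt hble
      have htn' : t ≤ n := Nat.le_of_succ_le htn
      set m := n - (t + 1) with hmdef
      have hm1 : m + 1 = n - t := by omega
      have hmlt : m < n := by omega
      have hdm : E.Admissible (d m).1 (d m).2 := hdadm m (le_of_lt hmlt)
      have hdm1 : E.Admissible (d (m + 1)).1 (d (m + 1)).2 := hdadm (m + 1) hmlt
      have hale : ∀ k, pairLE (d m) (E.meetP (b k) (d (m + 1))) := fun k =>
        meetP_glb (hbadm k) hdm1 hdm (hble k) (hdlt m hmlt).1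
      have hamono : ∀ k l, k ≤ l →
          pairLE (E.meetP (b l) (d (m + 1))) (E.meetP (b k) (d (m + 1))) := by
        intro k l hkl
        induction hkl with
        | refl => exact pairLE_refl _
        | @step l' hkl' ihm =>
            refine pairLE_trans (meetP_glb (hbadm _) hdm1
              (meetP_admissible (hbadm _) hdm1)
              (pairLE_trans meetP_le_left (hblt l').1) meetP_le_right) ihm
      have hconst : ∃ k₀, ∀ k, k₀ ≤ k →
          E.meetP (b k) (d (m + 1)) = E.meetP (b k₀) (d (m + 1)) := by
        by_cases hex : ∃ k₀, E.meetP (b k₀) (d (m + 1)) = d m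
        · obtain ⟨k₀, hk₀⟩ := hex
          refine ⟨k₀, fun k hk => ?_⟩
          rw [hk₀]
          apply pair_eq_of_le_le (meetP_admissible (hbadm _) hdm1) hdm
          · rw [← hk₀]
            exact hamono k₀ k hk
          · exact hale k
        · push_neg at hex
          have hall : ∀ k, E.meetP (b k) (d (m + 1)) = d (m + 1) := fun k =>
            ((hgap m hmlt _ (meetP_admissible (hbadm _) hdm1) (hale k)
              meetP_le_right).resolve_left (hex k))
          exact ⟨0, fun k _ => by rw [hall k, hall 0]⟩
      obtain ⟨k₀, hk₀⟩ := hconst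
      refine ih htn' (fun k => E.joinP (b (k + k₀)) (d (m + 1)))
        (fun _ => joinP_admissible) (fun k => ?_)
        (fun k => by rw [← hm1]; exact joinP_le_right hdm1)
      have hk1 : k + 1 + k₀ = k + k₀ + 1 := by omega
      constructor
      · show pairLE (E.joinP (b (k + 1 + k₀)) (d (m + 1))) (E.joinP (b (k + k₀)) (d (m + 1)))
        rw [hk1]
        refine joinP_lub joinP_admissible ?_ (joinP_le_right hdm1)
        exact pairLE_trans (hblt (k + k₀)).1 (joinP_le_left (hbadm _))
      · show ¬ E.joinP (b (k + 1 + k₀)) (d (m + 1)) = E.joinP (b (k + k₀)) (d (m + 1))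
        rw [hk1]
        intro hjeq
        exact (hblt (k + k₀)).2 (modStar (hbadm _) (hbadm _) hdm1 (hblt (k + k₀)).1
          (by rw [hk₀ (k + k₀ + 1) (by omega), hk₀ (k + k₀) (Nat.le_add_left _ _)]) hjeq)

end Chains

end DGraph
/-- Corollary: if there is an infinite strictly increasing chain of
admissible pairs above `(∅,∅)`, or an infinite strictly decreasing chain of
admissible pairs below `(E⁰,∅)`, then `E` has no composition series. -/
theorem no_comp_series_of_infinite_chain (E : DGraph)
    (c : ℕ → Set E.V × Set E.V)
    (hadm : ∀ n, E.Admissible (c n).1 (c n).2)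
    (h : (DGraph.pairLT (∅, ∅) (c 0) ∧ ∀ n, DGraph.pairLT (c n) (c (n + 1))) ∨
         (DGraph.pairLT (c 0) ((Set.univ : Set E.V), ∅) ∧
           ∀ n, DGraph.pairLT (c (n + 1)) (c n))) :
    ¬ E.HasCompSeries := by
  rintro ⟨n, d, hd0, hdn, hdadm, hdlt, hdcof⟩
  have hgap : ∀ i, i < n → ∀ e : Set E.V × Set E.V, E.Admissible e.1 e.2 →
      DGraph.pairLE (d i) e → DGraph.pairLE e (d (i + 1)) → e = d i ∨ e = d (i + 1) := by
    intro i hi e he hle1 hle2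
    by_cases h1 : e = d i
    · exact Or.inl h1
    by_cases h2 : e = d (i + 1)
    · exact Or.inr h2
    exact absurd (hdcof i hi)
      (fun hcof => DGraph.stepB (hdadm i (le_of_lt hi)) he (hdadm (i + 1) hi)
        hle1 hle2 (fun hh => h1 hh.symm) h2 hcof)
  rcases h with ⟨_, hstep⟩ | ⟨_, hstep⟩
  · exact DGraph.no_increasing_chain n d hdadm hdlt hgap hd0 n le_rfl c hadm hstep
      (fun k => by
        rw [hdn]
        exact ⟨Set.subset_univ _, fun x _ => Or.inl (Set.mem_univ x)⟩)
  · exact DGraph.no_decreasing_chain n d hdadm hdlt hgap hdn n le_rfl c hadm hstep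
      (fun k => by
        rw [Nat.sub_self, hd0]
        exact ⟨Set.empty_subset _, Set.empty_subset _⟩)
end

section
/- If E is a directed graph with finitely many vertices (E⁰ finite, though E may contain infinite emitters), then E has a composition series. -/
namespace DGraph

variable (E : DGraph)

/-! ### Basic closure lemmas -/

theorem hereditary_adj {H : Set E.V} (hH : E.Hereditary H) {u v : E.V}
    (hu : u ∈ H) (h : E.Adj u v) : v ∈ H :=
  hH u hu v (Relation.ReflTransGen.single h)

theorem satClosure_hereditary (W : Set E.V) : E.Hereditary (E.satClosure W) := by
  intro u hu v huv
  intro K hK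
  exact hK.1 u (hu K hK) v huv

theorem satClosure_saturated (W : Set E.V) : E.Saturated (E.satClosure W) := by
  intro v hreg hall
  intro K hK
  exact hK.2.1 v hreg (fun e he => hall e he K hK)

theorem subset_satClosure (W : Set E.V) : W ⊆ E.satClosure W := by
  intro w hw K hK
  exact hK.2.2 hw

theorem satClosure_min {W K : Set E.V} (h1 : E.Hereditary K) (h2 : E.Saturated K)
    (h3 : W ⊆ K) : E.satClosure W ⊆ K := by
  intro v hv
  exact hv K ⟨h1, h2, h3⟩

/-- Inductive description of the saturated closure (valid when `W` is closed under
adjacency). -/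
inductive SatC (W : Set E.V) : E.V → Prop
  | base {v : E.V} : v ∈ W → SatC W v
  | satd {v : E.V} : E.IsRegular v → (∀ e, E.s e = v → SatC W (E.r e)) → SatC W v

theorem satC_subset_satClosure {W : Set E.V} {v : E.V} (h : E.SatC W v) :
    v ∈ E.satClosure W := by
  induction h with
  | base hv => exact E.subset_satClosure W hv
  | satd hreg hall ih => exact E.satClosure_saturated W _ hreg (fun e he => ih e he)

theorem satC_adj {W : Set E.V} (hW : ∀ u ∈ W, ∀ v, E.Adj u v → v ∈ W)
    {u v : E.V} (hu : E.SatC W u) (h : E.Adj u v) : E.SatC W v := by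
  cases hu with
  | base huW => exact SatC.base (hW u huW v h)
  | satd hreg hall =>
    obtain ⟨e, he1, he2⟩ := h
    exact he2 ▸ hall e he1

theorem satC_hereditary {W : Set E.V} (hW : ∀ u ∈ W, ∀ v, E.Adj u v → v ∈ W) :
    E.Hereditary {v | E.SatC W v} := by
  intro u hu v huv
  induction huv with
  | refl => exact hu
  | tail _ hadj ih => exact E.satC_adj hW ih hadj

theorem satClosure_subset_satC {W : Set E.V} (hW : ∀ u ∈ W, ∀ v, E.Adj u v → v ∈ W) :
    E.satClosure W ⊆ {v | E.SatC W v} := by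
  apply E.satClosure_min (E.satC_hereditary hW)
  · intro v hreg hall
    exact SatC.satd hreg (fun e he => hall e he)
  · intro w hw
    exact SatC.base hw

/-- If `w ∉ H` with `H` hereditary, any path ending at `w` from a vertex of a
hereditary set `H'` stays inside `H' \ H`. -/
theorem reaches_restrict {H H' : Set E.V} (hH : E.Hereditary H) (hH' : E.Hereditary H')
    {u w : E.V} (hu : u ∈ H' \ H) (h : E.Reaches u w) : w ∉ H →
    Relation.ReflTransGen (fun a b => E.Adj a b ∧ a ∈ H' \ H ∧ b ∈ H' \ H) u w := by
  induction h with
  | refl => exact fun _ => Relation.ReflTransGen.refl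
  | @tail b c hub hbc ih =>
    intro hw
    have hbH : b ∉ H := fun hb => hw (E.hereditary_adj hH hb hbc)
    have hbH' : b ∈ H' := hH' u hu.1 b hub
    have hcH' : c ∈ H' := E.hereditary_adj hH' hbH' hbc
    exact Relation.ReflTransGen.tail (ih hbH) ⟨hbc, ⟨hbH', hbH⟩, ⟨hcH', hw⟩⟩

theorem mem_of_getLast?' {α : Type} {l : List α} {a : α} (h : l.getLast? = some a) :
    a ∈ l := by
  obtain ⟨hne, h2⟩ := List.mem_getLast?_eq_getLast (show a ∈ l.getLast? from h)
  rw [h2]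
  exact List.getLast_mem hne

/-! ### Segments of composition series -/

/-- A composition-series segment from pair `P` to pair `Q`. -/
def Seg (P Q : Set E.V × Set E.V) : Prop :=
  ∃ (n : ℕ) (c : ℕ → Set E.V × Set E.V),
    c 0 = P ∧ c n = Q ∧
    (∀ i, i ≤ n → E.Admissible (c i).1 (c i).2) ∧
    (∀ i, i < n → pairLT (c i) (c (i + 1))) ∧
    (∀ i, i < n → (E.PQ (c i).1 (c i).2 (c (i + 1)).1 (c (i + 1)).2).Cofinal)

theorem seg_refl {P : Set E.V × Set E.V} (hP : E.Admissible P.1 P.2) : E.Seg P P := by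
  refine ⟨0, fun _ => P, rfl, rfl, fun i _ => hP, fun i hi => absurd hi (Nat.not_lt_zero i),
    fun i hi => absurd hi (Nat.not_lt_zero i)⟩

theorem seg_single {P Q : Set E.V × Set E.V} (hP : E.Admissible P.1 P.2)
    (hQ : E.Admissible Q.1 Q.2) (hlt : pairLT P Q)
    (hcof : (E.PQ P.1 P.2 Q.1 Q.2).Cofinal) : E.Seg P Q := by
  refine ⟨1, fun i => if i = 0 then P else Q, by simp, by simp, ?_, ?_, ?_⟩
  · intro i _
    by_cases h : i = 0 <;> simp [h, hP, hQ]
  · intro i hi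
    interval_cases i
    simpa using hlt
  · intro i hi
    interval_cases i
    simpa using hcof

theorem seg_trans {P Q R : Set E.V × Set E.V} (h1 : E.Seg P Q) (h2 : E.Seg Q R) :
    E.Seg P R := by
  obtain ⟨n, c, hc0, hcn, hadm, hlt, hcof⟩ := h1
  obtain ⟨m, d, hd0, hdm, hadm', hlt', hcof'⟩ := h2
  refine ⟨n + m, fun i => if i ≤ n then c i else d (i - n), by simp [hc0], ?_, ?_, ?_, ?_⟩
  · by_cases hm : m = 0
    · subst hm
      simp [hcn, ← hdm, hd0]
    · have : ¬ (n + m ≤ n) := by omega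
      simp [this, hdm]
  · intro i hi
    by_cases h : i ≤ n
    · simpa [h] using hadm i h
    · have : i - n ≤ m := by omega
      simpa [h] using hadm' (i - n) this
  · intro i hi
    by_cases h : i + 1 ≤ n
    · have h' : i ≤ n := by omega
      simpa [h, h'] using hlt i (by omega)
    · have h2' : ¬ (i + 1 ≤ n) := h
      have key : (if i ≤ n then c i else d (i - n)) = d (i - n) := by
        by_cases h3 : i ≤ n
        · have : i = n := by omega
          subst this
          simp [hcn, ← hd0]
        · simp [h3]
      have h4 : i + 1 - n = (i - n) + 1 := by omega
      simp only [key, h2', if_false, h4]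
      exact hlt' (i - n) (by omega)
  · intro i hi
    by_cases h : i + 1 ≤ n
    · have h' : i ≤ n := by omega
      simpa [h, h'] using hcof i (by omega)
    · have h2' : ¬ (i + 1 ≤ n) := h
      have key : (if i ≤ n then c i else d (i - n)) = d (i - n) := by
        by_cases h3 : i ≤ n
        · have : i = n := by omega
          subst this
          simp [hcn, ← hd0]
        · simp [h3]
      have h4 : i + 1 - n = (i - n) + 1 := by omega
      simp only [key, h2', if_false, h4]
      exact hcof' (i - n) (by omega)

end DGraph
namespace DGraph

variable (E : DGraph)

section ShapeA

variable (H S : Set E.V) (v : E.V) (hv : v ∉ S)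

theorem diffA (hv : v ∉ S) : (S ∪ {v}) \ S = {v} := by
  ext x
  constructor
  · rintro ⟨h1 | h1, h2⟩
    · exact absurd h1 h2
    · exact h1
  · rintro rfl
    exact ⟨Or.inr rfl, hv⟩

theorem F1A : E.F1 H S H (S ∪ {v}) = ∅ := by
  ext es
  simp only [Set.mem_empty_iff_false, iff_false]
  rintro ⟨hne, _, hlast⟩
  obtain ⟨l, hl⟩ := Option.isSome_iff_exists.mp (List.getLast?_isSome.mpr hne)
  have := (hlast l hl).1
  simp at this

theorem BHGA : E.BHG H H = ∅ := by
  ext u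
  simp only [Set.mem_empty_iff_false, iff_false]
  rintro ⟨_, _, ⟨e, he1, he2⟩, _⟩
  simp at he2

theorem cofinal_A (hv : v ∉ S) : (E.PQ H S H (S ∪ {v})).Cofinal := by
  set Q := E.PQ H S H (S ∪ {v}) with hQ
  -- no pr vertices
  have noPrV : ∀ u : E.V, ¬ E.PQVok H S H (S ∪ {v}) (.pr u) := by
    intro u hu
    have := hu.2
    rw [E.BHGA H] at this
    exact this
  have noPrE : ∀ e : E.Ed, ¬ E.PQEok H S H (S ∪ {v}) (.pr e) := by
    intro e he
    have := he.2
    rw [E.BHGA H] at this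
    exact this
  have noOldE : ∀ e : E.Ed, ¬ E.PQEok H S H (S ∪ {v}) (.old e) := by
    intro e he
    have := he.1
    simp at this
  -- the distinguished vertex
  have hvok : E.PQVok H S H (S ∪ {v}) (.old v) := Or.inr ⟨Or.inr rfl, hv⟩
  set oldv : Q.V := ⟨.old v, hvok⟩ with holdv
  -- wp memberships are F2 memberships
  have wpF2 : ∀ es : List E.Ed, E.PQVok H S H (S ∪ {v}) (.wp es) → es ∈ E.F2 S (S ∪ {v}) := by
    intro es hes
    rcases hes with h | h
    · rw [E.F1A H S v] at h
      exact absurd h (Set.notMem_empty es)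
    · exact h
  -- the descent lemma
  have descend : ∀ (es : List E.Ed) (h : E.PQVok H S H (S ∪ {v}) (.wp es)),
      Q.Reaches ⟨.wp es, h⟩ oldv := by
    intro es
    induction es with
    | nil =>
      intro h
      exact absurd (wpF2 [] h).1 (fun h' => h' rfl)
    | cons e rest ih =>
      intro h
      cases rest with
      | nil =>
        have hF2 := wpF2 [e] h
        have hre : E.r e = v := by
          have := hF2.2.2 e (by simp [List.getLast?_singleton])
          rw [diffA E S v hv] at this
          exact this
        refine Relation.ReflTransGen.single ⟨⟨.fp [e], h⟩, rfl, ?_⟩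
        exact Subtype.ext (by show PQV.old (E.r e) = PQV.old v; rw [hre])
      | cons f q =>
        have hF2 := wpF2 (e :: f :: q) h
        have h' : E.PQVok H S H (S ∪ {v}) (.wp (f :: q)) := by
          refine Or.inr ⟨by simp, hF2.2.1.tail, ?_⟩
          intro a ha
          exact hF2.2.2 a (by rw [List.getLast?_cons_cons]; exact ha)
        refine Relation.ReflTransGen.head ⟨⟨.fp (e :: f :: q), h⟩, rfl, rfl⟩ (ih h')
  -- terminal vertices are `oldv`
  have terminal : ∀ y : Q.V, (Q.IsSink y ∨ Q.IsInfEmitter y) → y = oldv := by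
    rintro ⟨x, hx⟩ hy
    cases x with
    | old u =>
      rcases hx with h | h
      · simp at h
      · rw [diffA E S v hv] at h
        exact Subtype.ext (by show PQV.old u = PQV.old v; rw [h])
    | pr u => exact absurd hx (noPrV u)
    | wp es =>
      exfalso
      have hmem : (⟨.fp es, hx⟩ : Q.Ed) ∈ Q.emits ⟨.wp es, hx⟩ := rfl
      have hsub : Q.emits ⟨.wp es, hx⟩ ⊆ {⟨.fp es, hx⟩} := by
        rintro ⟨d, hd⟩ hmem'
        cases d with
        | old e =>
          exact absurd hd (noOldE e)
        | pr e =>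
          exact absurd hd (noPrE e)
        | fp es' =>
          have : PQV.wp es' = PQV.wp es := congrArg Subtype.val hmem'
          have hes' : es' = es := by injection this
          subst hes'
          rfl
      rcases hy with hy | hy
      · rw [show Q.IsSink _ = (Q.emits ⟨.wp es, hx⟩ = ∅) from rfl] at hy
        rw [hy] at hmem
        exact hmem
      · exact hy ((Set.finite_singleton _).subset hsub)
  -- everything reaches oldv
  have reach : ∀ x : Q.V, Q.Reaches x oldv := by
    rintro ⟨x, hx⟩
    cases x with
    | old u =>
      rcases hx with h | h
      · simp at h
      · rw [diffA E S v hv] at h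
        obtain rfl : u = v := h
        exact Relation.ReflTransGen.refl
    | pr u => exact absurd hx (noPrV u)
    | wp es => exact descend es hx
  intro x p hp
  cases p with
  | fin u es =>
    obtain ⟨hwalk, hterm⟩ := hp
    have hy : Q.endVert u es = oldv := terminal _ hterm
    refine ⟨oldv, ?_, reach x⟩
    show oldv ∈ Q.walkVerts u es
    cases hes : es.getLast? with
    | none =>
      have : es = [] := List.getLast?_eq_none_iff.mp hes
      subst this
      have : Q.endVert u [] = u := rfl
      rw [this] at hy
      rw [← hy]
      exact Set.mem_insert u _
    | some l =>
      have hey : Q.endVert u es = Q.r l := by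
        show es.getLast?.elim u Q.r = Q.r l
        rw [hes]
        rfl
      right
      exact ⟨l, mem_of_getLast?' hes, by rw [← hey, hy]⟩
  | inf f =>
    exfalso
    have hfp : ∀ n, ∃ es, (f n).1 = PQE.fp es := by
      intro n
      obtain ⟨d, hd⟩ := f n
      cases d with
      | old e => exact absurd hd (noOldE e)
      | pr e => exact absurd hd (noPrE e)
      | fp es => exact ⟨es, rfl⟩
    have step : ∀ n (es : List E.Ed), (f n).1 = .fp es →
        ∃ q, q ≠ [] ∧ (f (n+1)).1 = .fp q ∧ q.length + 1 = es.length := by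
      intro n es hes
      obtain ⟨es', hes'⟩ := hfp (n + 1)
      have hr : PQrng E (f n).1 = PQsrc E H S H (S ∪ {v}) (f (n+1)).1 :=
        congrArg Subtype.val (hp n)
      rw [hes, hes'] at hr
      cases es with
      | nil =>
        have hx := (f n).2
        rw [hes] at hx
        rcases hx with h | h
        · exact absurd rfl h.1
        · exact absurd rfl h.1
      | cons e rest =>
        cases rest with
        | nil =>
          exfalso
          have : PQV.old (E.r e) = PQV.wp es' := hr
          injection this
        | cons g q =>
          have : PQV.wp (g :: q) = PQV.wp es' := hr
          have : g :: q = es' := by injection this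
          exact ⟨es', by rw [← this]; simp, hes', by rw [← this]; simp⟩
    obtain ⟨es0, hes0⟩ := hfp 0
    have key : ∀ k, ∃ es, (f k).1 = .fp es ∧ es.length + k ≤ es0.length := by
      intro k
      induction k with
      | zero => exact ⟨es0, hes0, by omega⟩
      | succ k ih =>
        obtain ⟨es, hes, hlen⟩ := ih
        obtain ⟨q, hqne, hq, hqlen⟩ := step k es hes
        exact ⟨q, hq, by omega⟩
    obtain ⟨es, hes, hlen⟩ := key es0.length
    obtain ⟨q, _, _, hqlen⟩ := step _ es hes
    omega

end ShapeA

end DGraph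
namespace DGraph

variable (E : DGraph)

section ShapeB

variable (H C : Set E.V)

theorem F2B (S : Set E.V) : E.F2 S ∅ = ∅ := by
  ext es
  simp only [Set.mem_empty_iff_false, iff_false]
  rintro ⟨hne, _, hlast⟩
  obtain ⟨l, hl⟩ := Option.isSome_iff_exists.mp (List.getLast?_isSome.mpr hne)
  have := hlast l hl
  rw [Set.empty_diff] at this
  exact this

theorem cofinal_B (hH : E.Hereditary H) (hHsat : E.Saturated H)
    (hCH : ∀ c ∈ C, c ∉ H)
    (hCadj : ∀ c ∈ C, ∀ x, E.Adj c x → x ∈ H ∪ C)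
    (hCconn : ∀ c ∈ C, ∀ c' ∈ C, E.Reaches c c') :
    (E.PQ H (E.satClosure (H ∪ C) ∩ E.BHG H (E.satClosure (H ∪ C)))
      (E.satClosure (H ∪ C)) ∅).Cofinal := by
  classical
  set H' := E.satClosure (H ∪ C) with hH'def
  set S := H' ∩ E.BHG H H' with hSdef
  set W := H' \ H with hWdef
  set Q := E.PQ H S H' ∅ with hQ
  have hH'her : E.Hereditary H' := E.satClosure_hereditary _
  have hH'sat : E.Saturated H' := E.satClosure_saturated _
  have hbase : ∀ u ∈ H ∪ C, ∀ x, E.Adj u x → x ∈ H ∪ C := by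
    rintro u (hu | hu) x hx
    · exact Or.inl (E.hereditary_adj hH hu hx)
    · exact hCadj u hu x hx
  have hsatC : ∀ u ∈ H', E.SatC (H ∪ C) u := fun u hu => E.satClosure_subset_satC hbase hu
  have hCW : ∀ c ∈ C, c ∈ W := fun c hc => ⟨E.subset_satClosure _ (Or.inr hc), hCH c hc⟩
  -- vertex/edge characterizations
  have noPrV : ∀ u : E.V, ¬ E.PQVok H S H' ∅ (.pr u) := by
    rintro u ⟨⟨h1, h2⟩, h3⟩
    refine h2 ⟨?_, h3⟩
    rcases h1 with h | h
    · exact h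
    · exact absurd h (Set.notMem_empty u)
  have noPrE : ∀ e : E.Ed, ¬ E.PQEok H S H' ∅ (.pr e) := by
    rintro e ⟨⟨h1, h2⟩, h3⟩
    refine h2 ⟨?_, h3⟩
    rcases h1 with h | h
    · exact h
    · exact absurd h (Set.notMem_empty _)
  have oldV : ∀ u : E.V, E.PQVok H S H' ∅ (.old u) → u ∈ W := by
    intro u hu
    rcases hu with h | h
    · exact h
    · rw [Set.empty_diff] at h
      exact absurd h (Set.notMem_empty u)
  have oldE : ∀ e : E.Ed, E.PQEok H S H' ∅ (.old e) → E.r e ∈ W ∧ E.s e ∈ W := by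
    rintro e ⟨h1, h2⟩
    refine ⟨h1, ?_⟩
    rcases h2 with h | h
    · exact h
    · rw [Set.empty_diff] at h
      exact absurd h (Set.notMem_empty _)
  have wpF1 : ∀ es : List E.Ed, es ∈ E.F1 H S H' ∅ ∪ E.F2 S ∅ → es ∈ E.F1 H S H' ∅ := by
    intro es hes
    rcases hes with h | h
    · exact h
    · rw [E.F2B S] at h
      exact absurd h (Set.notMem_empty es)
  -- reaching C inside W
  have toC : ∀ x, E.SatC (H ∪ C) x → x ∈ H ∨ ∃ c ∈ C,
      Relation.ReflTransGen (fun a b => E.Adj a b ∧ a ∈ W ∧ b ∈ W) x c := by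
    intro x hx
    induction hx with
    | @base v hv =>
      rcases hv with h | h
      · exact Or.inl h
      · exact Or.inr ⟨v, h, Relation.ReflTransGen.refl⟩
    | @satd v hreg hall ih =>
      by_cases hvH : v ∈ H
      · exact Or.inl hvH
      right
      by_cases hex : ∃ e, E.s e = v ∧ E.r e ∉ H
      · obtain ⟨e, he1, he2⟩ := hex
        rcases ih e he1 with h | ⟨c, hc, hpath⟩
        · exact absurd h he2
        refine ⟨c, hc, Relation.ReflTransGen.head ⟨⟨e, he1, rfl⟩, ?_, ?_⟩ hpath⟩
        · exact ⟨E.satC_subset_satClosure (SatC.satd hreg hall), hvH⟩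
        · exact ⟨E.satC_subset_satClosure (hall e he1), he2⟩
      · push_neg at hex
        exfalso
        exact hvH (hHsat v hreg (fun e he => hex e he))
  -- no infinite path avoiding H ∪ C
  have noInf : ∀ x, E.SatC (H ∪ C) x → x ∈ H ∪ C ∨ ∀ g : ℕ → E.Ed, E.IsInfPath g →
      E.s (g 0) = x → ∃ n, E.s (g n) ∈ H ∪ C := by
    intro x hx
    induction hx with
    | @base v hv => exact Or.inl hv
    | @satd v hreg hall ih =>
      by_cases hvHC : v ∈ H ∪ C
      · exact Or.inl hvHC
      right
      intro g hg hg0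
      rcases ih (g 0) hg0 with h | h
      · exact ⟨1, by rw [← hg 0]; exact h⟩
      · obtain ⟨n, hn⟩ := h (fun k => g (k + 1)) (fun k => hg (k + 1)) (hg 0).symm
        exact ⟨n + 1, hn⟩
  -- lifting W-paths to Q
  have lift : ∀ a b, Relation.ReflTransGen (fun a b => E.Adj a b ∧ a ∈ W ∧ b ∈ W) a b →
      ∀ (ha : E.PQVok H S H' ∅ (.old a)) (hb : E.PQVok H S H' ∅ (.old b)),
      Q.Reaches ⟨.old a, ha⟩ ⟨.old b, hb⟩ := by
    intro a b h
    induction h with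
    | refl => intro ha hb; exact Relation.ReflTransGen.refl
    | @tail b c hab hbc ih =>
      intro ha hc
      obtain ⟨⟨e, he1, he2⟩, hbW, hcW⟩ := hbc
      have hbok : E.PQVok H S H' ∅ (.old b) := Or.inl hbW
      have heok : E.PQEok H S H' ∅ (.old e) := ⟨he2 ▸ hcW, Or.inl (he1 ▸ hbW)⟩
      refine Relation.ReflTransGen.tail (ih ha hbok) ⟨⟨.old e, heok⟩, ?_, ?_⟩
      · exact Subtype.ext (by show PQV.old (E.s e) = PQV.old b; rw [he1])
      · exact Subtype.ext (by show PQV.old (E.r e) = PQV.old c; rw [he2])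
  -- spines descend to old vertices
  have descend : ∀ (es : List E.Ed) (h : E.PQVok H S H' ∅ (.wp es)),
      ∃ u, ∃ hu : u ∈ W, Q.Reaches ⟨.wp es, h⟩ ⟨.old u, Or.inl hu⟩ := by
    intro es
    induction es with
    | nil =>
      intro h
      exact absurd (wpF1 [] h).1 (fun h' => h' rfl)
    | cons e rest ih =>
      intro h
      cases rest with
      | nil =>
        have hF1 := wpF1 [e] h
        have hre : E.r e ∈ W := by
          have := hF1.2.2 e (by simp [List.getLast?_singleton])
          exact this.1
        refine ⟨E.r e, hre, Relation.ReflTransGen.single ⟨⟨.fp [e], h⟩, rfl, rfl⟩⟩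
      | cons f q =>
        have hF1 := wpF1 (e :: f :: q) h
        have h' : E.PQVok H S H' ∅ (.wp (f :: q)) := by
          refine Or.inl ⟨by simp, hF1.2.1.tail, ?_⟩
          intro a ha
          exact hF1.2.2 a (by rw [List.getLast?_cons_cons]; exact ha)
        obtain ⟨u, hu, hreach⟩ := ih h'
        exact ⟨u, hu, Relation.ReflTransGen.head ⟨⟨.fp (e :: f :: q), h⟩, rfl, rfl⟩ hreach⟩
  -- everything reaches any old vertex of C
  have reach_oldc : ∀ (x : Q.V) (c : E.V), c ∈ C → ∀ (w : Q.V), w.1 = .old c →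
      Q.Reaches x w := by
    have reachW : ∀ u, ∀ hu : u ∈ W, ∀ c : E.V, c ∈ C → ∀ (w : Q.V), w.1 = .old c →
        Q.Reaches ⟨.old u, Or.inl hu⟩ w := by
      intro u hu c hc w hw
      rcases toC u (hsatC u hu.1) with h | ⟨c₀, hc₀, hpath⟩
      · exact absurd h hu.2
      have h1 : Q.Reaches ⟨.old u, Or.inl hu⟩ ⟨.old c₀, Or.inl (hCW c₀ hc₀)⟩ :=
        lift u c₀ hpath _ _
      have hpath2 : Relation.ReflTransGen (fun a b => E.Adj a b ∧ a ∈ W ∧ b ∈ W) c₀ c := by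
        have := E.reaches_restrict hH hH'her (hCW c₀ hc₀) (hCconn c₀ hc₀ c hc) (hCH c hc)
        exact this
      have h2 : Q.Reaches ⟨.old c₀, Or.inl (hCW c₀ hc₀)⟩ ⟨.old c, Or.inl (hCW c hc)⟩ :=
        lift c₀ c hpath2 _ _
      have hw' : w = ⟨.old c, Or.inl (hCW c hc)⟩ := Subtype.ext hw
      rw [hw']
      exact Relation.ReflTransGen.trans h1 h2
    rintro ⟨x, hx⟩ c hc w hw
    cases x with
    | old u => exact reachW u (oldV u hx) c hc w hw
    | pr u => exact absurd hx (noPrV u)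
    | wp es =>
      obtain ⟨u, hu, hreach⟩ := descend es hx
      exact Relation.ReflTransGen.trans hreach (reachW u hu c hc w hw)
  -- terminal vertices lie in C
  have terminal : ∀ y : Q.V, (Q.IsSink y ∨ Q.IsInfEmitter y) →
      ∃ c ∈ C, y.1 = PQV.old c := by
    rintro ⟨x, hx⟩ hy
    cases x with
    | pr u => exact absurd hx (noPrV u)
    | wp es =>
      exfalso
      have hmem : (⟨.fp es, hx⟩ : Q.Ed) ∈ Q.emits ⟨.wp es, hx⟩ := rfl
      have hsub : Q.emits ⟨.wp es, hx⟩ ⊆ {⟨.fp es, hx⟩} := by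
        rintro ⟨d, hd⟩ hmem'
        cases d with
        | old e =>
          exfalso
          have : PQV.old (E.s e) = PQV.wp es := congrArg Subtype.val hmem'
          injection this
        | pr e => exact absurd hd (noPrE e)
        | fp es' =>
          have : PQV.wp es' = PQV.wp es := congrArg Subtype.val hmem'
          have hes' : es' = es := by injection this
          subst hes'
          rfl
      rcases hy with hy | hy
      · rw [show Q.IsSink _ = (Q.emits ⟨.wp es, hx⟩ = ∅) from rfl] at hy
        rw [hy] at hmem
        exact hmem
      · exact hy ((Set.finite_singleton _).subset hsub)
    | old u =>
      have huW : u ∈ W := oldV u hx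
      cases hsatC u huW.1 with
      | base hbase' =>
        rcases hbase' with h | h
        · exact absurd h huW.2
        · exact ⟨u, h, rfl⟩
      | satd hreg hall =>
        exfalso
        -- u has an edge staying in W
        have hex : ∃ e, E.s e = u ∧ E.r e ∉ H := by
          by_contra hno
          push_neg at hno
          exact huW.2 (hHsat u hreg (fun e he => hno e he))
        obtain ⟨e, he1, he2⟩ := hex
        have heok : E.PQEok H S H' ∅ (.old e) :=
          ⟨⟨E.satC_subset_satClosure (hall e he1), he2⟩, Or.inl (he1 ▸ huW)⟩
        have hmem : (⟨.old e, heok⟩ : Q.Ed) ∈ Q.emits ⟨.old u, hx⟩ :=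
          Subtype.ext (by show PQV.old (E.s e) = PQV.old u; rw [he1])
        rcases hy with hy | hy
        · rw [show Q.IsSink _ = (Q.emits ⟨.old u, hx⟩ = ∅) from rfl] at hy
          rw [hy] at hmem
          exact hmem
        · -- u is regular, so finitely many Q-edges
          obtain ⟨e₀, he₀⟩ := hreg.1
          set F : Q.Ed → E.Ed := fun d => match d.1 with
            | .old e => e
            | .fp _ => e₀
            | .pr e => e with hF
          have himg : F '' (Q.emits ⟨.old u, hx⟩) ⊆ E.emits u := by
            rintro _ ⟨⟨d, hd⟩, hdm, rfl⟩
            cases d with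
            | old e =>
              have : PQV.old (E.s e) = PQV.old u := congrArg Subtype.val hdm
              have : E.s e = u := by injection this
              exact this
            | fp es =>
              exfalso
              have : PQV.wp es = PQV.old u := congrArg Subtype.val hdm
              injection this
            | pr e => exact absurd hd (noPrE e)
          have hinj : Set.InjOn F (Q.emits ⟨.old u, hx⟩) := by
            rintro ⟨d1, hd1⟩ hm1 ⟨d2, hd2⟩ hm2 heq
            cases d1 with
            | fp es =>
              exfalso
              have : PQV.wp es = PQV.old u := congrArg Subtype.val hm1
              injection this
            | pr e => exact absurd hd1 (noPrE e)
            | old e1 =>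
              cases d2 with
              | fp es =>
                exfalso
                have : PQV.wp es = PQV.old u := congrArg Subtype.val hm2
                injection this
              | pr e => exact absurd hd2 (noPrE e)
              | old e2 =>
                have : e1 = e2 := heq
                subst this
                rfl
          have hfin : (Q.emits ⟨.old u, hx⟩).Finite :=
            Set.Finite.of_finite_image (hreg.2.subset himg) hinj
          exact hy hfin
  -- main cofinality argument
  intro x p hp
  cases p with
  | fin u es =>
    obtain ⟨hwalk, hterm⟩ := hp
    obtain ⟨c, hc, hy⟩ := terminal _ hterm
    refine ⟨Q.endVert u es, ?_, reach_oldc x c hc _ hy⟩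
    show Q.endVert u es ∈ Q.walkVerts u es
    cases hes : es.getLast? with
    | none =>
      have : es = [] := List.getLast?_eq_none_iff.mp hes
      subst this
      exact Set.mem_insert u _
    | some l =>
      have hey : Q.endVert u es = Q.r l := by
        show es.getLast?.elim u Q.r = Q.r l
        rw [hes]
        rfl
      right
      exact ⟨l, mem_of_getLast?' hes, hey.symm⟩
  | inf f =>
    -- find an `old` edge on the path
    have next_old : ∀ n e, (f n).1 = .old e →
        ∃ e', (f (n+1)).1 = .old e' ∧ E.s e' = E.r e := by
      intro n e hn
      have hr : PQrng E (f n).1 = PQsrc E H S H' ∅ (f (n+1)).1 :=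
        congrArg Subtype.val (hp n)
      rw [hn] at hr
      rcases hfn : f (n+1) with ⟨d, hd⟩
      rw [hfn] at hr
      cases d with
      | old e' =>
        refine ⟨e', rfl, ?_⟩
        have h2 : PQV.old (E.r e) = PQV.old (E.s e') := hr
        injection h2 with h
        exact h.symm
      | fp es =>
        exfalso
        have : PQV.old (E.r e) = PQV.wp es := hr
        injection this
      | pr e' => exact absurd hd (noPrE e')
    have spine : ∀ (es : List E.Ed) n, (f n).1 = .fp es → ∃ m e, (f m).1 = .old e := by
      intro es
      induction es with
      | nil =>
        intro n hn
        exfalso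
        have hd := (f n).2
        rw [hn] at hd
        exact absurd (wpF1 [] hd).1 (fun h' => h' rfl)
      | cons e rest ih =>
        intro n hn
        have hr : PQrng E (f n).1 = PQsrc E H S H' ∅ (f (n+1)).1 :=
          congrArg Subtype.val (hp n)
        rw [hn] at hr
        cases rest with
        | nil =>
          rcases hfn : f (n+1) with ⟨d, hd⟩
          rw [hfn] at hr
          cases d with
          | old e' => exact ⟨n+1, e', by rw [hfn]⟩
          | fp es' =>
            exfalso
            have : PQV.old (E.r e) = PQV.wp es' := hr
            injection this
          | pr e' => exact absurd hd (noPrE e')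
        | cons g q =>
          have hstep : (f (n+1)).1 = PQE.fp (g :: q) := by
            rcases hfn : f (n+1) with ⟨d, hd⟩
            rw [hfn] at hr
            cases d with
            | old e' =>
              exfalso
              have h2 : PQV.wp (g :: q) = PQV.old (E.s e') := hr
              injection h2
            | pr e' => exact absurd hd (noPrE e')
            | fp es' =>
              have h2 : PQV.wp (g :: q) = PQV.wp es' := hr
              have h3 : g :: q = es' := by injection h2
              show PQE.fp es' = PQE.fp (g :: q)
              rw [h3]
          exact ih (n+1) hstep
    have first_old : ∃ m e, (f m).1 = .old e := by
      rcases h0 : (f 0).1 with e | es | e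
      · exact ⟨0, e, h0⟩
      · exact spine es 0 h0
      · exfalso
        have := (f 0).2
        rw [h0] at this
        exact noPrE e this
    obtain ⟨m, e₁, hm⟩ := first_old
    have hseq : ∀ k, ∃ e, (f (m + k)).1 = .old e := by
      intro k
      induction k with
      | zero => exact ⟨e₁, hm⟩
      | succ k ih =>
        obtain ⟨e, he⟩ := ih
        obtain ⟨e', he', _⟩ := next_old (m + k) e he
        exact ⟨e', he'⟩
    set g : ℕ → E.Ed := fun k => (hseq k).choose with hgdef
    have hgspec : ∀ k, (f (m + k)).1 = .old (g k) := fun k => (hseq k).choose_spec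
    have hgW : ∀ k, E.r (g k) ∈ W ∧ E.s (g k) ∈ W := by
      intro k
      have := (f (m + k)).2
      rw [hgspec k] at this
      exact oldE (g k) this
    have hgpath : E.IsInfPath g := by
      intro k
      obtain ⟨e', he', hse⟩ := next_old (m + k) (g k) (hgspec k)
      have heq : e' = g (k + 1) := by
        have h1 := hgspec (k + 1)
        rw [show m + (k + 1) = m + k + 1 from rfl, he'] at h1
        injection h1 with hh
      rw [← heq]
      exact hse.symm
    by_cases hCC : ∃ k, E.s (g k) ∈ C
    · obtain ⟨k, hk⟩ := hCC
      refine ⟨Q.s (f (m + k)), ⟨m + k, rfl⟩, ?_⟩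
      apply reach_oldc x (E.s (g k)) hk
      have hval : (Q.s (f (m + k))).1 = PQsrc E H S H' ∅ (f (m + k)).1 := rfl
      rw [hval, hgspec k]
      rfl
    · push_neg at hCC
      exfalso
      rcases noInf (E.s (g 0)) (hsatC _ (hgW 0).2.1) with h | h
      · rcases h with h | h
        · exact (hgW 0).2.2 h
        · exact hCC 0 h
      · obtain ⟨n, hn⟩ := h g hgpath rfl
        rcases hn with hn | hn
        · exact (hgW n).2.2 hn
        · exact hCC n hn

end ShapeB

end DGraph
namespace DGraph

variable (E : DGraph)

theorem hereditary_empty : E.Hereditary ∅ := fun u hu => absurd hu (Set.notMem_empty u)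

theorem saturated_empty : E.Saturated ∅ := by
  intro v hreg hall
  obtain ⟨e, he⟩ := hreg.1
  exact absurd (hall e he) (Set.notMem_empty _)

theorem hereditary_univ : E.Hereditary Set.univ := fun u _ v _ => Set.mem_univ v

theorem saturated_univ : E.Saturated Set.univ := fun v _ _ => Set.mem_univ v

theorem admissible_univ : E.Admissible Set.univ ∅ :=
  ⟨E.hereditary_univ, E.saturated_univ, Set.empty_subset _⟩

theorem S_subset_breaking {H H' : Set E.V} (hH' : E.Hereditary H') :
    H' ∩ E.BHG H H' ⊆ E.breaking H := by
  rintro v ⟨hvH', hvnH, hinf, hne, hfin⟩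
  have hset : {e | E.s e = v ∧ E.r e ∉ H} = {e | E.s e = v ∧ E.r e ∈ H' \ H} := by
    ext e
    constructor
    · rintro ⟨h1, h2⟩
      exact ⟨h1, ⟨E.hereditary_adj hH' hvH' ⟨e, h1, rfl⟩, h2⟩⟩
    · rintro ⟨h1, h2⟩
      exact ⟨h1, h2.2⟩
  refine ⟨hvnH, hinf, ?_, ?_⟩
  · rw [hset]; exact hne
  · rw [hset]; exact hfin

theorem seg_addS {H : Set E.V} (hH : E.Hereditary H) (hHsat : E.Saturated H)
    (S : Set E.V) (hfin : S.Finite) (hsub : S ⊆ E.breaking H) :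
    E.Seg (H, ∅) (H, S) := by
  have key : ∀ T : Set E.V, T.Finite → (T ⊆ E.breaking H → E.Seg (H, ∅) (H, T)) := by
    intro T hT
    refine Set.Finite.induction_on (motive := fun T _ => T ⊆ E.breaking H → E.Seg (H, ∅) (H, T))
      T hT (fun _ => E.seg_refl ⟨hH, hHsat, Set.empty_subset _⟩) ?_
    intro a s ha hsfin ih hsub'
    have hs' : s ⊆ E.breaking H := fun x hx => hsub' (Set.mem_insert_of_mem a hx)
    refine E.seg_trans (ih hs') (E.seg_single ⟨hH, hHsat, hs'⟩ ⟨hH, hHsat, hsub'⟩ ?_ ?_)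
    · constructor
      · exact ⟨subset_rfl, fun x hx => Or.inr (Set.mem_insert_of_mem a hx)⟩
      · intro h
        have : s = insert a s := congrArg Prod.snd h
        exact ha (this ▸ Set.mem_insert a s)
    · have := E.cofinal_A H s a ha
      rw [Set.union_singleton] at this
      exact this
  exact key S hfin hsub

theorem seg_to_top (hfin : Finite E.V) :
    ∀ (k : ℕ) (H : Set E.V), E.Hereditary H → E.Saturated H →
      (Set.univ \ H).ncard ≤ k → E.Seg (H, ∅) (Set.univ, ∅) := by
  haveI := hfin
  intro k
  induction k with
  | zero =>
    intro H hH hHsat hcard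
    have h0 : (Set.univ \ H).ncard = 0 := Nat.le_zero.mp hcard
    have : Set.univ \ H = ∅ := (Set.ncard_eq_zero (Set.toFinite _)).mp h0
    have : H = Set.univ := Set.univ_subset_iff.mp (Set.diff_eq_empty.mp this)
    subst this
    exact E.seg_refl E.admissible_univ
  | succ k ih =>
    intro H hH hHsat hcard
    by_cases hHuniv : H = Set.univ
    · subst hHuniv
      exact E.seg_refl E.admissible_univ
    · have hne : (Set.univ \ H).Nonempty := by
        rw [Set.nonempty_iff_ne_empty]
        intro h
        exact hHuniv (Set.univ_subset_iff.mp (Set.diff_eq_empty.mp h))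
      set D : E.V → Set E.V := fun u => {w | E.Reaches u w ∧ w ∉ H} with hD
      obtain ⟨v₀, hv₀mem, hv₀min⟩ :=
        Set.exists_min_image (Set.univ \ H) (fun u => (D u).ncard) (Set.toFinite _) hne
      set C : Set E.V := D v₀ with hC
      have hv₀C : v₀ ∈ C := ⟨Relation.ReflTransGen.refl, hv₀mem.2⟩
      have hCH : ∀ c ∈ C, c ∉ H := fun c hc => hc.2
      have hCadj : ∀ c ∈ C, ∀ x, E.Adj c x → x ∈ H ∪ C := by
        intro c hc x hx
        by_cases hxH : x ∈ H
        · exact Or.inl hxH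
        · exact Or.inr ⟨Relation.ReflTransGen.tail hc.1 hx, hxH⟩
      have hCconn : ∀ c ∈ C, ∀ c' ∈ C, E.Reaches c c' := by
        intro c hc c' hc'
        have hsub : D c ⊆ D v₀ := by
          rintro w ⟨h1, h2⟩
          exact ⟨Relation.ReflTransGen.trans hc.1 h1, h2⟩
        have hle : (D v₀).ncard ≤ (D c).ncard := hv₀min c ⟨Set.mem_univ c, hc.2⟩
        have heq : D c = D v₀ := Set.eq_of_subset_of_ncard_le hsub hle (Set.toFinite _)
        have : v₀ ∈ D c := heq ▸ hv₀C
        exact Relation.ReflTransGen.trans this.1 hc'.1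
      set H' : Set E.V := E.satClosure (H ∪ C) with hH'
      set S : Set E.V := H' ∩ E.BHG H H' with hS
      have hH'her : E.Hereditary H' := E.satClosure_hereditary _
      have hH'sat : E.Saturated H' := E.satClosure_saturated _
      have hHH' : H ⊆ H' :=
        fun x hx => E.subset_satClosure _ (Or.inl hx)
      have hv₀H' : v₀ ∈ H' := E.subset_satClosure _ (Or.inr hv₀C)
      have hSbr : S ⊆ E.breaking H := E.S_subset_breaking hH'her
      have seg1 : E.Seg (H, ∅) (H, S) := E.seg_addS hH hHsat S (Set.toFinite _) hSbr
      have seg2 : E.Seg (H, S) (H', ∅) := by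
        refine E.seg_single ⟨hH, hHsat, hSbr⟩ ⟨hH'her, hH'sat, Set.empty_subset _⟩ ?_ ?_
        · constructor
          · exact ⟨hHH', fun x hx => Or.inl hx.1⟩
          · intro h
            have : H = H' := congrArg Prod.fst h
            exact hv₀mem.2 (this ▸ hv₀H')
        · exact E.cofinal_B H C hH hHsat hCH hCadj hCconn
      have hcard' : (Set.univ \ H').ncard ≤ k := by
        have hsub2 : Set.univ \ H' ⊆ Set.univ \ H := fun x hx => ⟨hx.1, fun h => hx.2 (hHH' h)⟩
        have hss : Set.univ \ H' ⊂ Set.univ \ H := by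
          refine (Set.ssubset_iff_of_subset hsub2).mpr ⟨v₀, ⟨Set.mem_univ _, hv₀mem.2⟩, ?_⟩
          intro h
          exact h.2 hv₀H'
        have := Set.ncard_lt_ncard hss (Set.toFinite _)
        omega
      exact E.seg_trans seg1 (E.seg_trans seg2 (ih H' hH'her hH'sat hcard'))

end DGraph
/-- Corollary: every graph with finitely many vertices (possibly
with infinite emitters) has a composition series. -/
theorem comp_series_of_finite_vertices (E : DGraph) (h : Finite E.V) :
    E.HasCompSeries := by
  obtain ⟨n, c, h1, h2, h3, h4, h5⟩ :=
    E.seg_to_top h (Set.univ \ (∅ : Set E.V)).ncard ∅ E.hereditary_empty E.saturated_empty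
      le_rfl
  exact ⟨n, c, h1, h2, h3, h4, h5⟩
end
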